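/- arXiv:1408.2317 — 4 statements merged into one kernel-verified Lean document; each statement's English description precedes it below -/
import Mathlib

section
/- The total chromatic number of the complete graph K_n equals n if n is odd and n+1 if n is even. -/
namespace ITC

variable {V : Type*}

/-- A total coloring: proper on vertices, edges, and incident vertex-edge pairs. -/
def IsTotalColoring (G : SimpleGraph V) (cv : V → ℕ) (ce : Sym2 V → ℕ) : Prop :=
  (∀ u v, G.Adj u v → cv u ≠ cv v) ∧
  (∀ e f, e ∈ G.edgeSet → f ∈ G.edgeSet → e ≠ f → (∃ w, w ∈ e ∧ w ∈ f) → ce e ≠ ce f) ∧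
  (∀ v e, e ∈ G.edgeSet → v ∈ e → cv v ≠ ce e)

/-- The set of colors on a vertex `v` together with its incident edges. -/
def palette (G : SimpleGraph V) (cv : V → ℕ) (ce : Sym2 V → ℕ) (v : V) : Set ℕ :=
  insert (cv v) {c | ∃ e ∈ G.edgeSet, v ∈ e ∧ ce e = c}

/-- Degree of a vertex. -/
noncomputable def deg (G : SimpleGraph V) (v : V) : ℕ := (G.neighborSet v).ncard

/-- An interval total `t`-coloring. -/
def IsIntervalTotalColoring (G : SimpleGraph V) (t : ℕ) (cv : V → ℕ)
    (ce : Sym2 V → ℕ) : Prop :=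
  IsTotalColoring G cv ce ∧
  (∀ v, cv v ∈ Set.Icc 1 t) ∧ (∀ e ∈ G.edgeSet, ce e ∈ Set.Icc 1 t) ∧
  (∀ c ∈ Set.Icc 1 t, (∃ v, cv v = c) ∨ (∃ e ∈ G.edgeSet, ce e = c)) ∧
  (∀ v, ∃ a, palette G cv ce v = Set.Icc a (a + deg G v))

def HasIntervalTotalColoring (G : SimpleGraph V) (t : ℕ) : Prop :=
  ∃ cv ce, IsIntervalTotalColoring G t cv ce

/-- Minimum span of interval total colorings. -/
noncomputable def wtau (G : SimpleGraph V) : ℕ := sInf {t | HasIntervalTotalColoring G t}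

/-- Maximum span of interval total colorings. -/
noncomputable def Wtau (G : SimpleGraph V) : ℕ := sSup {t | HasIntervalTotalColoring G t}

/-- Total chromatic number: least `k` such that there is a total coloring
with colors in `{1, …, k}`. -/
noncomputable def totalChromaticNumber (G : SimpleGraph V) : ℕ :=
  sInf {k | ∃ cv ce, IsTotalColoring G cv ce ∧ (∀ v, cv v ∈ Set.Icc 1 k) ∧
    ∀ e ∈ G.edgeSet, ce e ∈ Set.Icc 1 k}

/-- A proper edge coloring. -/
def IsProperEdgeColoring (G : SimpleGraph V) (ce : Sym2 V → ℕ) : Prop :=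
  ∀ e f, e ∈ G.edgeSet → f ∈ G.edgeSet → e ≠ f → (∃ w, w ∈ e ∧ w ∈ f) → ce e ≠ ce f

/-- Colors appearing on the edges incident to `v`. -/
def edgePalette (G : SimpleGraph V) (ce : Sym2 V → ℕ) (v : V) : Set ℕ :=
  {c | ∃ e ∈ G.edgeSet, v ∈ e ∧ ce e = c}

/-- An interval (edge) `t`-coloring. -/
def IsIntervalEdgeColoring (G : SimpleGraph V) (t : ℕ) (ce : Sym2 V → ℕ) : Prop :=
  IsProperEdgeColoring G ce ∧
  (∀ e ∈ G.edgeSet, ce e ∈ Set.Icc 1 t) ∧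
  (∀ c ∈ Set.Icc 1 t, ∃ e ∈ G.edgeSet, ce e = c) ∧
  (∀ v, ∃ a, edgePalette G ce v = Set.Icc (a + 1) (a + deg G v))

/-- The hypercube `Q_n`. -/
def hypercube (n : ℕ) : SimpleGraph (Fin n → Bool) where
  Adj u v := ∃! i, u i ≠ v i
  symm := by
    constructor
    rintro u v ⟨i, hi, hu⟩
    exact ⟨i, Ne.symm hi, fun j hj => hu j (Ne.symm hj)⟩
  loopless := by
    constructor
    rintro u ⟨i, hi, -⟩
    exact hi rfl

/-- The complete graph on `Fin (2*r)` minus the perfect matching joining `i` and `i+r`. -/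
def Kminus (r : ℕ) : SimpleGraph (Fin (2 * r)) where
  Adj i j := i ≠ j ∧ ¬((i : ℕ) + r = (j : ℕ) ∨ (j : ℕ) + r = (i : ℕ))
  symm := by
    constructor
    rintro i j ⟨h1, h2⟩
    exact ⟨h1.symm, fun h => h2 h.symm⟩
  loopless := by
    constructor
    rintro i ⟨h1, -⟩
    exact h1 rfl

/-- Blow up each vertex of `H` into a copy of `β` (no edges inside copies). -/
def blowup {α : Type*} (H : SimpleGraph α) (β : Type*) : SimpleGraph (α × β) where
  Adj u v := H.Adj u.1 v.1
  symm := ⟨fun _ _ h => H.adj_symm h⟩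
  loopless := ⟨fun u h => H.irrefl h⟩

private lemma mem_top_edge {n : ℕ} {a b : Fin n} :
    s(a, b) ∈ (⊤ : SimpleGraph (Fin n)).edgeSet ↔ a ≠ b := by
  simp [SimpleGraph.mem_edgeSet]

private lemma edge_form {n : ℕ} {e : Sym2 (Fin n)}
    (he : e ∈ (⊤ : SimpleGraph (Fin n)).edgeSet) {w : Fin n} (hw : w ∈ e) :
    ∃ u, u ≠ w ∧ e = s(w, u) := by
  revert he hw
  refine Sym2.ind (fun a b he hw => ?_) e
  rw [mem_top_edge] at he
  rcases Sym2.mem_iff.mp hw with rfl | rfl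
  · exact ⟨b, Ne.symm he, rfl⟩
  · exact ⟨a, he, Sym2.eq_swap.symm⟩

/-- The set whose infimum is the total chromatic number. -/
private def Tset (n : ℕ) : Set ℕ :=
  {k | ∃ cv ce, IsTotalColoring (⊤ : SimpleGraph (Fin n)) cv ce ∧
    (∀ v, cv v ∈ Set.Icc 1 k) ∧
    ∀ e ∈ (⊤ : SimpleGraph (Fin n)).edgeSet, ce e ∈ Set.Icc 1 k}

private lemma tcn_eq_sInf (n : ℕ) :
    totalChromaticNumber (⊤ : SimpleGraph (Fin n)) = sInf (Tset n) := rfl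

/-- Upper bound: an explicit total coloring with `m` colors, `m` odd, `n ≤ m`. -/
private lemma coloring_exists (n m : ℕ) (hnm : n ≤ m) (hm : Odd m) : m ∈ Tset n := by
  have hmpos : 0 < m := hm.pos
  have hlt : ∀ v : Fin n, (v : ℕ) < m := fun v => lt_of_lt_of_le v.2 hnm
  have cancel : ∀ a b : Fin n, (a : ℕ) % m = (b : ℕ) % m → a = b := by
    intro a b h
    rw [Nat.mod_eq_of_lt (hlt a), Nat.mod_eq_of_lt (hlt b)] at h
    exact Fin.ext h
  refine ⟨fun v => 2 * (v : ℕ) % m + 1,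
    Sym2.lift ⟨fun a b => ((a : ℕ) + (b : ℕ)) % m + 1, fun a b => by simp [Nat.add_comm]⟩,
    ⟨?_, ?_, ?_⟩, ?_, ?_⟩
  · -- vertices
    intro u v huv h
    have h2 : 2 * (u : ℕ) ≡ 2 * (v : ℕ) [MOD m] := by
      have := Nat.add_right_cancel h
      exact this
    have := Nat.ModEq.cancel_left_of_coprime (by
      have : Nat.Coprime 2 m := hm.coprime_two_left
      simpa [Nat.coprime_comm] using this) h2
    exact ((SimpleGraph.top_adj u v).mp huv) (cancel u v this)
  · -- edges
    intro e f he hf hef ⟨w, hwe, hwf⟩ hcc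
    obtain ⟨u, hu, rfl⟩ := edge_form he hwe
    obtain ⟨u', hu', rfl⟩ := edge_form hf hwf
    simp only [Sym2.lift_mk] at hcc
    have h2 : ((w : ℕ) + (u : ℕ)) ≡ ((w : ℕ) + (u' : ℕ)) [MOD m] := Nat.add_right_cancel hcc
    have := cancel u u' (Nat.ModEq.add_left_cancel' _ h2)
    exact hef (by rw [this])
  · -- incidence
    intro v e he hv hcc
    obtain ⟨u, hu, rfl⟩ := edge_form he hv
    simp only [Sym2.lift_mk] at hcc
    have h2 : ((v : ℕ) + (v : ℕ)) ≡ ((v : ℕ) + (u : ℕ)) [MOD m] := by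
      have := Nat.add_right_cancel hcc
      simp only [two_mul] at this
      exact this
    exact hu (cancel v u (Nat.ModEq.add_left_cancel' _ h2)).symm
  · intro v
    exact ⟨Nat.le_add_left 1 _, Nat.succ_le_of_lt (Nat.mod_lt _ hmpos)⟩
  · intro e _
    revert e
    refine fun e => Sym2.ind (fun a b _ => ?_) e
    exact ⟨Nat.le_add_left 1 _, Nat.succ_le_of_lt (Nat.mod_lt _ hmpos)⟩

/-- Lower bound `n ≤ k` for any total coloring with colors in `{1,…,k}`. -/
private lemma lb_ge {n k : ℕ} (hn : 0 < n) (hk : k ∈ Tset n) : n ≤ k := by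
  classical
  obtain ⟨cv, ce, ⟨h1, h2, h3⟩, hv, he⟩ := hk
  set v0 : Fin n := ⟨0, hn⟩ with hv0
  set g : Fin n → ℕ := fun v => if v = v0 then cv v0 else ce s(v0, v) with hg
  have hedge : ∀ v : Fin n, v ≠ v0 → s(v0, v) ∈ (⊤ : SimpleGraph (Fin n)).edgeSet :=
    fun v hv => mem_top_edge.mpr (Ne.symm hv)
  have hginj : Set.InjOn g (Finset.univ : Finset (Fin n)) := by
    intro a _ b _ hab
    by_cases ha : a = v0 <;> by_cases hb : b = v0
    · rw [ha, hb]
    · exfalso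
      rw [hg] at hab
      simp only [ha, if_pos rfl, if_neg hb] at hab
      exact h3 v0 s(v0, b) (hedge b hb) (Sym2.mem_mk_left _ _) hab
    · exfalso
      rw [hg] at hab
      simp only [hb, if_pos rfl, if_neg ha] at hab
      exact h3 v0 s(v0, a) (hedge a ha) (Sym2.mem_mk_left _ _) hab.symm
    · rw [hg] at hab
      simp only [if_neg ha, if_neg hb] at hab
      by_contra hne
      refine h2 s(v0, a) s(v0, b) (hedge a ha) (hedge b hb) ?_
        ⟨v0, Sym2.mem_mk_left _ _, Sym2.mem_mk_left _ _⟩ hab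
      intro h
      exact hne (Sym2.congr_right.mp h)
  have hmaps : ∀ a ∈ (Finset.univ : Finset (Fin n)), g a ∈ Finset.Icc 1 k := by
    intro a _
    rw [hg]
    by_cases ha : a = v0
    · simp only [if_pos ha]
      exact Finset.mem_Icc.mpr (hv v0)
    · simp only [if_neg ha]
      exact Finset.mem_Icc.mpr (he _ (hedge a ha))
  have := Finset.card_le_card_of_injOn g hmaps hginj
  simpa using this

/-- For even `n > 0`, there is no total coloring of `K_n` with `n` colors. -/
private lemma even_not_mem {n : ℕ} (hn : 0 < n) (hne : ¬ Odd n) : n ∉ Tset n := by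
  classical
  rintro ⟨cv, ce, ⟨h1, h2, h3⟩, hv, he⟩
  have hEven : Even n := Nat.not_odd_iff_even.mp hne
  have hinj : Function.Injective cv := by
    intro a b hab
    by_contra hne'
    exact h1 a b ((SimpleGraph.top_adj a b).mpr hne') hab
  -- some vertex has color n
  have hVimg : (Finset.univ.image cv) = Finset.Icc 1 n := by
    refine Finset.eq_of_subset_of_card_le ?_ ?_
    · intro c hc
      obtain ⟨v, _, rfl⟩ := Finset.mem_image.mp hc
      exact Finset.mem_Icc.mpr (hv v)
    · rw [Finset.card_image_of_injective _ hinj]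
      simp
  obtain ⟨w, -, hw⟩ : ∃ w ∈ Finset.univ, cv w = n := by
    have : (n : ℕ) ∈ Finset.Icc 1 n := Finset.mem_Icc.mpr ⟨hn, le_rfl⟩
    rw [← hVimg] at this
    exact Finset.mem_image.mp this
  have hedge : ∀ (v u : Fin n), u ≠ v → s(v, u) ∈ (⊤ : SimpleGraph (Fin n)).edgeSet :=
    fun v u h => mem_top_edge.mpr (Ne.symm h)
  -- uniqueness of equally-colored edges at a vertex
  have huniq : ∀ (v u u' : Fin n), u ≠ v → u' ≠ v → ce s(v, u) = ce s(v, u') → u = u' := by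
    intro v u u' hu hu' hcc
    by_contra hne'
    refine h2 s(v, u) s(v, u') (hedge v u hu) (hedge v u' hu') ?_
      ⟨v, Sym2.mem_mk_left _ _, Sym2.mem_mk_left _ _⟩ hcc
    intro h
    exact hne' (Sym2.congr_right.mp h)
  -- every vertex ≠ w has a unique incident edge of color n, whose other end ≠ w
  have key : ∀ v : Fin n, v ≠ w → ∃ u, u ≠ v ∧ u ≠ w ∧ ce s(v, u) = n := by
    intro v hvw
    set A := (Finset.univ.filter (· ≠ v)).image (fun u => ce s(v, u)) with hA
    have hAcard : A.card = n - 1 := by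
      rw [hA, Finset.card_image_of_injOn, Finset.filter_ne', Finset.card_erase_of_mem
        (Finset.mem_univ v)]
      · simp
      · intro a ha b hb hab
        simp only [Finset.mem_coe, Finset.mem_filter] at ha hb
        exact huniq v a b ha.2 hb.2 hab
    have hsub : A ⊆ (Finset.Icc 1 n).erase (cv v) := by
      intro c hc
      obtain ⟨u, hu, rfl⟩ := Finset.mem_image.mp hc
      simp only [Finset.mem_filter] at hu
      refine Finset.mem_erase.mpr ⟨?_, Finset.mem_Icc.mpr (he _ (hedge v u hu.2))⟩
      exact fun h => h3 v s(v, u) (hedge v u hu.2) (Sym2.mem_mk_left _ _) h.symm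
    have hAeq : A = (Finset.Icc 1 n).erase (cv v) := by
      refine Finset.eq_of_subset_of_card_le hsub ?_
      rw [hAcard, Finset.card_erase_of_mem (Finset.mem_Icc.mpr (hv v))]
      simp
    have hnA : (n : ℕ) ∈ A := by
      rw [hAeq]
      refine Finset.mem_erase.mpr ⟨?_, Finset.mem_Icc.mpr ⟨hn, le_rfl⟩⟩
      intro h
      exact hvw (hinj (h.symm.trans hw.symm))
    obtain ⟨u, hu, hcu⟩ := Finset.mem_image.mp hnA
    simp only [Finset.mem_filter] at hu
    refine ⟨u, hu.2, ?_, hcu⟩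
    intro huw
    subst huw
    exact h3 u s(v, u) (hedge v u hu.2) (Sym2.mem_mk_right _ _) (hw.trans hcu.symm)
  -- parity contradiction via a fixed-point-free involution on Fin n \ {w}
  set S : Finset (Fin n) := Finset.univ.filter (· ≠ w) with hS
  have hmemS : ∀ a, a ∈ S ↔ a ≠ w := by
    intro a; simp [hS]
  have hScard : S.card = n - 1 := by
    rw [hS, Finset.filter_ne', Finset.card_erase_of_mem (Finset.mem_univ w)]
    simp
  have hsum : ∑ _x ∈ S, (1 : ZMod 2) = 0 := by
    refine Finset.sum_involution
      (fun a ha => (key a ((hmemS a).mp ha)).choose)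
      (fun a ha => by decide)
      (fun a ha _ => (key a ((hmemS a).mp ha)).choose_spec.1)
      (fun a ha => (hmemS _).mpr (key a ((hmemS a).mp ha)).choose_spec.2.1)
      ?_
    intro a ha
    set b := (key a ((hmemS a).mp ha)).choose with hb
    obtain ⟨hba, hbw, hcb⟩ := (key a ((hmemS a).mp ha)).choose_spec
    obtain ⟨hab', -, hcab⟩ := (key b hbw).choose_spec
    refine huniq b _ a hab' (Ne.symm hba) ?_
    rw [hcab, Sym2.eq_swap]
    exact hcb.symm
  have : ((n - 1 : ℕ) : ZMod 2) = 0 := by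
    have := hsum
    rwa [Finset.sum_const, hScard, nsmul_eq_mul, mul_one] at this
  have hodd : Odd (n - 1) := Nat.Even.sub_odd hn hEven odd_one
  rw [← ZMod.natCast_mod, Nat.odd_iff.mp hodd] at this
  simp at this

theorem stmt0 (n : ℕ) (hn : 0 < n) :
    totalChromaticNumber (⊤ : SimpleGraph (Fin n)) = if Odd n then n else n + 1 := by
  classical
  by_cases hodd : Odd n
  · rw [if_pos hodd, tcn_eq_sInf]
    have hmem := coloring_exists n n le_rfl hodd
    exact le_antisymm (Nat.sInf_le hmem) (lb_ge hn (Nat.sInf_mem ⟨n, hmem⟩))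
  · rw [if_neg hodd, tcn_eq_sInf]
    have hmodd : Odd (n + 1) := Even.add_one (Nat.not_odd_iff_even.mp hodd)
    have hmem := coloring_exists n (n + 1) (Nat.le_succ n) hmodd
    have hInfmem : sInf (Tset n) ∈ Tset n := Nat.sInf_mem ⟨n + 1, hmem⟩
    have hlb : n ≤ sInf (Tset n) := lb_ge hn hInfmem
    refine le_antisymm (Nat.sInf_le hmem) ?_
    rcases lt_or_eq_of_le hlb with h | h
    · exact h
    · rw [← h] at hInfmem
      exact absurd hInfmem (even_not_mem hn hodd)

end ITC
end

section
/- For every positive integer l, there exists a graph G admitting an interval total coloring such that w_τ(G) − χ''(G) ≥ l. Specifically, with n = l+3, the complete bipartite graph K_{n+l, 2n} satisfies w_τ(K_{n+l,2n}) ≥ 2n+1+l while χ''(K_{n+l,2n}) = 2n+1. -/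
namespace ITC

variable {V : Type*}

section AuxBip
variable {m N : ℕ}

lemma edge_form_s3 {e : Sym2 (Fin m ⊕ Fin N)}
    (he : e ∈ (completeBipartiteGraph (Fin m) (Fin N)).edgeSet) :
    ∃ i j, e = s(Sum.inl i, Sum.inr j) := by
  induction e with
  | _ x y =>
    rw [SimpleGraph.mem_edgeSet] at he
    rcases he with ⟨h1, h2⟩ | ⟨h1, h2⟩
    · rcases x with i | i <;> rcases y with j | j <;> simp_all
    · rcases x with i | i <;> rcases y with j | j <;> simp_all

lemma edge_mem (i : Fin m) (j : Fin N) :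
    s(Sum.inl i, Sum.inr j) ∈ (completeBipartiteGraph (Fin m) (Fin N)).edgeSet := by
  simp

lemma deg_left (i : Fin m) :
    deg (completeBipartiteGraph (Fin m) (Fin N)) (Sum.inl i) = N := by
  have h : (completeBipartiteGraph (Fin m) (Fin N)).neighborSet (Sum.inl i)
      = Set.range (Sum.inr : Fin N → Fin m ⊕ Fin N) := by
    ext v
    rcases v with a | a <;> simp [SimpleGraph.neighborSet]
  rw [deg, h, ← Set.image_univ, Set.ncard_image_of_injective _ Sum.inr_injective,
    Set.ncard_univ]
  simp

lemma deg_right (j : Fin N) :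
    deg (completeBipartiteGraph (Fin m) (Fin N)) (Sum.inr j) = m := by
  have h : (completeBipartiteGraph (Fin m) (Fin N)).neighborSet (Sum.inr j)
      = Set.range (Sum.inl : Fin m → Fin m ⊕ Fin N) := by
    ext v
    rcases v with a | a <;> simp [SimpleGraph.neighborSet]
  rw [deg, h, ← Set.image_univ, Set.ncard_image_of_injective _ Sum.inl_injective,
    Set.ncard_univ]
  simp

end AuxBip

section ConstrA
variable (m N : ℕ)

def cvA : Fin m ⊕ Fin N → ℕ := Sum.elim (fun i => (i : ℕ) + 1) (fun j => (j : ℕ) + m + 2)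

def hh : Fin m ⊕ Fin N → ℕ := Sum.elim (fun i => (i : ℕ) + 1) (fun j => (j : ℕ) + 1)

def ceA : Sym2 (Fin m ⊕ Fin N) → ℕ :=
  Sym2.lift ⟨fun u v => hh m N u + hh m N v, fun u v => add_comm _ _⟩

lemma ceA_eq (i : Fin m) (j : Fin N) :
    ceA m N s(Sum.inl i, Sum.inr j) = (i : ℕ) + (j : ℕ) + 2 := by
  simp [ceA, hh]; ring

lemma constrA (hm : 0 < m) (hN : 0 < N) :
    HasIntervalTotalColoring (completeBipartiteGraph (Fin m) (Fin N)) (m + N + 1) := by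
  refine ⟨cvA m N, ceA m N, ⟨?_, ?_, ?_⟩, ?_, ?_, ?_, ?_⟩
  · intro u v hadj
    rcases u with i | i <;> rcases v with j | j <;> simp_all [cvA] <;> omega
  · intro e f he hf hne hw
    obtain ⟨i, j, rfl⟩ := edge_form_s3 he
    obtain ⟨i', j', rfl⟩ := edge_form_s3 hf
    obtain ⟨w, hwe, hwf⟩ := hw
    rw [Sym2.mem_iff] at hwe hwf
    rw [ceA_eq, ceA_eq]
    have hij : (i : ℕ) = i' ∧ (j : ℕ) = j' → False := by
      intro ⟨h1, h2⟩
      have hi : i = i' := Fin.ext h1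
      have hj : j = j' := Fin.ext h2
      subst hi; subst hj; exact hne rfl
    rcases hwe with rfl | rfl <;> rcases hwf with h | h <;>
      first
      | (simp_all; omega)
      | simp_all
  · intro v e he hv
    obtain ⟨i, j, rfl⟩ := edge_form_s3 he
    rw [Sym2.mem_iff] at hv
    have := i.isLt
    rcases hv with rfl | rfl <;> rw [ceA_eq] <;> simp [cvA] <;> omega
  · intro v
    rcases v with i | j
    · have := i.isLt; simp [cvA]; omega
    · have := j.isLt; simp [cvA]; omega
  · intro e he
    obtain ⟨i, j, rfl⟩ := edge_form_s3 he
    have := i.isLt; have := j.isLt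
    rw [ceA_eq]; constructor <;> omega
  · intro c hc
    obtain ⟨hc1, hc2⟩ := hc
    by_cases h1 : c ≤ m
    · exact Or.inl ⟨Sum.inl ⟨c - 1, by omega⟩, by simp [cvA]; omega⟩
    · by_cases h2 : c ≤ m + N
      · refine Or.inr ⟨s(Sum.inl ⟨m - 1, by omega⟩, Sum.inr ⟨c - m - 1, by omega⟩),
          edge_mem _ _, ?_⟩
        rw [ceA_eq]; simp; omega
      · exact Or.inl ⟨Sum.inr ⟨N - 1, by omega⟩, by simp [cvA]; omega⟩
  · intro v
    rcases v with i | j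
    · refine ⟨(i : ℕ) + 1, ?_⟩
      rw [deg_left]
      ext c
      simp only [palette, Set.mem_insert_iff, Set.mem_setOf_eq, Set.mem_Icc, cvA, Sum.elim_inl]
      constructor
      · rintro (rfl | ⟨e, he, hv, rfl⟩)
        · omega
        · obtain ⟨i', j', rfl⟩ := edge_form_s3 he
          rw [Sym2.mem_iff] at hv
          have hii : i' = i := by rcases hv with h | h <;> simp_all
          subst hii
          rw [ceA_eq]
          have := j'.isLt; omega
      · intro ⟨hca, hcb⟩
        by_cases hc : c = (i : ℕ) + 1
        · exact Or.inl hc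
        · refine Or.inr ⟨s(Sum.inl i, Sum.inr ⟨c - i - 2, by omega⟩), edge_mem _ _,
            by simp, ?_⟩
          rw [ceA_eq]; simp; omega
    · refine ⟨(j : ℕ) + 2, ?_⟩
      rw [deg_right]
      ext c
      simp only [palette, Set.mem_insert_iff, Set.mem_setOf_eq, Set.mem_Icc, cvA, Sum.elim_inr]
      constructor
      · rintro (rfl | ⟨e, he, hv, rfl⟩)
        · omega
        · obtain ⟨i', j', rfl⟩ := edge_form_s3 he
          rw [Sym2.mem_iff] at hv
          have hjj : j' = j := by rcases hv with h | h <;> simp_all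
          subst hjj
          rw [ceA_eq]
          have := i'.isLt; omega
      · intro ⟨hca, hcb⟩
        by_cases hc : c = (j : ℕ) + m + 2
        · exact Or.inl hc
        · refine Or.inr ⟨s(Sum.inl ⟨c - j - 2, by omega⟩, Sum.inr j), edge_mem _ _,
            by simp, ?_⟩
          rw [ceA_eq]; simp; omega

end ConstrA

section ConstrB
variable (m N : ℕ)

def pp : Fin m ⊕ Fin N → ℕ := Sum.elim (fun i => (i : ℕ)) (fun j => (j : ℕ))

def cvB : Fin m ⊕ Fin N → ℕ :=
  Sum.elim (fun _ => N + 1) (fun j => (((j : ℕ) + m) % N) + 1)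

def ceB : Sym2 (Fin m ⊕ Fin N) → ℕ :=
  Sym2.lift ⟨fun u v => ((pp m N u + pp m N v) % N) + 1,
    fun u v => by dsimp only; rw [Nat.add_comm (pp m N u) (pp m N v)]⟩

lemma ceB_eq (i : Fin m) (j : Fin N) :
    ceB m N s(Sum.inl i, Sum.inr j) = (((i : ℕ) + (j : ℕ)) % N) + 1 := by
  simp [ceB, pp]

lemma mod_cancel {a b c n : ℕ} (h : (a + b) % n = (a + c) % n) (hb : b < n) (hc : c < n) :
    b = c := by
  have h2 : b % n = c % n := Nat.ModEq.add_left_cancel' a h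
  rwa [Nat.mod_eq_of_lt hb, Nat.mod_eq_of_lt hc] at h2

lemma constrB (hm : 0 < m) (hmN : m < N) :
    IsTotalColoring (completeBipartiteGraph (Fin m) (Fin N)) (cvB m N) (ceB m N) ∧
    (∀ v, cvB m N v ∈ Set.Icc 1 (N + 1)) ∧
    ∀ e ∈ (completeBipartiteGraph (Fin m) (Fin N)).edgeSet, ceB m N e ∈ Set.Icc 1 (N + 1) := by
  have hN : 0 < N := lt_trans hm hmN
  refine ⟨⟨?_, ?_, ?_⟩, ?_, ?_⟩
  · intro u v hadj
    rcases u with i | i <;> rcases v with j | j <;> simp_all [cvB]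
    · have := Nat.mod_lt ((j : ℕ) + m) hN; omega
    · have := Nat.mod_lt ((i : ℕ) + m) hN; omega
  · intro e f he hf hne hw
    obtain ⟨i, j, rfl⟩ := edge_form_s3 he
    obtain ⟨i', j', rfl⟩ := edge_form_s3 hf
    obtain ⟨w, hwe, hwf⟩ := hw
    rw [Sym2.mem_iff] at hwe hwf
    rw [ceB_eq, ceB_eq]
    intro hcol
    have hcol' : ((i : ℕ) + (j : ℕ)) % N = ((i' : ℕ) + (j' : ℕ)) % N := by omega
    rcases hwe with rfl | rfl <;> rcases hwf with h | h <;> simp_all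
    · exact hne (Fin.ext (mod_cancel hcol' j.isLt j'.isLt))
    · rw [add_comm (i : ℕ), add_comm (i' : ℕ)] at hcol'
      exact hne (Fin.ext (mod_cancel hcol' (lt_trans i.isLt hmN) (lt_trans i'.isLt hmN)))
  · intro v e he hv
    obtain ⟨i, j, rfl⟩ := edge_form_s3 he
    rw [Sym2.mem_iff] at hv
    rcases hv with rfl | rfl <;> rw [ceB_eq] <;> simp [cvB]
    · have := Nat.mod_lt ((i : ℕ) + (j : ℕ)) hN; omega
    · intro hcol
      have hcol' : ((j : ℕ) + m) % N = ((j : ℕ) + (i : ℕ)) % N := by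
        rw [add_comm (i : ℕ)] at hcol; omega
      have : m = (i : ℕ) := mod_cancel hcol' hmN (lt_trans i.isLt hmN)
      have := i.isLt; omega
  · intro v
    rcases v with i | j <;> simp [cvB]
    have := Nat.mod_lt ((j : ℕ) + m) hN; omega
  · intro e he
    obtain ⟨i, j, rfl⟩ := edge_form_s3 he
    rw [ceB_eq]
    have := Nat.mod_lt ((i : ℕ) + (j : ℕ)) hN
    constructor <;> omega

lemma tc_lower (hm : 0 < m) {k : ℕ} {cv : Fin m ⊕ Fin N → ℕ} {ce : Sym2 (Fin m ⊕ Fin N) → ℕ}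
    (h : IsTotalColoring (completeBipartiteGraph (Fin m) (Fin N)) cv ce)
    (hcv : ∀ v, cv v ∈ Set.Icc 1 k)
    (hce : ∀ e ∈ (completeBipartiteGraph (Fin m) (Fin N)).edgeSet, ce e ∈ Set.Icc 1 k) :
    N + 1 ≤ k := by
  obtain ⟨hv, hee, hve⟩ := h
  set i0 : Fin m := ⟨0, hm⟩
  set F : Fin (N + 1) → ℕ := fun x =>
    if hx : (x : ℕ) < N then ce s(Sum.inl i0, Sum.inr ⟨x, hx⟩) else cv (Sum.inl i0) with hF
  have hmaps : ∀ x ∈ (Finset.univ : Finset (Fin (N + 1))), F x ∈ Finset.Icc 1 k := by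
    intro x _
    rw [hF]
    by_cases hx : (x : ℕ) < N
    · simp only [dif_pos hx]
      have := hce _ (edge_mem i0 ⟨x, hx⟩)
      simp_all [Set.mem_Icc]
    · simp only [dif_neg hx]
      have := hcv (Sum.inl i0)
      simp_all [Set.mem_Icc]
  have hinj : Set.InjOn F (Finset.univ : Finset (Fin (N + 1))) := by
    intro x _ y _ hxy
    rw [hF] at hxy
    by_cases hx : (x : ℕ) < N <;> by_cases hy : (y : ℕ) < N
    · simp only [dif_pos hx, dif_pos hy] at hxy
      by_contra hne
      have hjne : (⟨(x : ℕ), hx⟩ : Fin N) ≠ ⟨(y : ℕ), hy⟩ := by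
        intro hc
        exact hne (Fin.ext (by simpa using congrArg Fin.val hc))
      have hEne : s(Sum.inl i0, Sum.inr (⟨(x : ℕ), hx⟩ : Fin N)) ≠
          s(Sum.inl i0, Sum.inr (⟨(y : ℕ), hy⟩ : Fin N)) :=
        fun hc => hjne (Sum.inr_injective (Sym2.congr_right.mp hc))
      exact hee _ _ (edge_mem _ _) (edge_mem _ _) hEne
        ⟨Sum.inl i0, by simp, by simp⟩ hxy
    · simp only [dif_pos hx, dif_neg hy] at hxy
      exact absurd hxy.symm (hve _ _ (edge_mem _ _) (by simp))
    · simp only [dif_neg hx, dif_pos hy] at hxy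
      exact absurd hxy (hve _ _ (edge_mem _ _) (by simp))
    · have := x.isLt; have := y.isLt
      exact Fin.ext (by omega)
  have := Finset.card_le_card_of_injOn F hmaps hinj
  simpa [Nat.card_Icc] using this

lemma tc_eq (hm : 0 < m) (hmN : m < N) :
    totalChromaticNumber (completeBipartiteGraph (Fin m) (Fin N)) = N + 1 := by
  have hmem : (N + 1) ∈ {k | ∃ cv ce,
      IsTotalColoring (completeBipartiteGraph (Fin m) (Fin N)) cv ce ∧
      (∀ v, cv v ∈ Set.Icc 1 k) ∧
      ∀ e ∈ (completeBipartiteGraph (Fin m) (Fin N)).edgeSet, ce e ∈ Set.Icc 1 k} := by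
    obtain ⟨h1, h2, h3⟩ := constrB m N hm hmN
    exact ⟨cvB m N, ceB m N, h1, h2, h3⟩
  refine le_antisymm (Nat.sInf_le hmem) (le_csInf ⟨_, hmem⟩ ?_)
  rintro k ⟨cv, ce, h1, h2, h3⟩
  exact tc_lower m N hm h1 h2 h3

end ConstrB

lemma itc_ge (l n : ℕ) (hl : 0 < l) (hn : n = l + 3) (t : ℕ)
    (h : HasIntervalTotalColoring (completeBipartiteGraph (Fin (n + l)) (Fin (2 * n))) t) :
    2 * n + 1 + l ≤ t := by
  by_contra hlt
  push_neg at hlt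
  have ht : t ≤ 2 * n + l := by omega
  obtain ⟨cv, ce, ⟨hv, hee, hve⟩, hcv, hce, _, hpal⟩ := h
  have hm : 0 < n + l := by omega
  have hsub : ∀ v, palette (completeBipartiteGraph (Fin (n + l)) (Fin (2 * n))) cv ce v
      ⊆ Set.Icc 1 t := by
    rintro v c (rfl | ⟨e, he, -, rfl⟩)
    · exact hcv v
    · exact hce e he
  have hpalB : ∀ j : Fin (2 * n), ∃ b, 1 ≤ b ∧ b + (n + l) ≤ t ∧
      palette (completeBipartiteGraph (Fin (n + l)) (Fin (2 * n))) cv ce (Sum.inr j)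
        = Set.Icc b (b + (n + l)) := by
    intro j
    obtain ⟨b, hb⟩ := hpal (Sum.inr j)
    rw [deg_right] at hb
    have h1 : b ∈ Set.Icc 1 t := hsub _ (by rw [hb]; exact Set.mem_Icc.2 ⟨le_refl _, by omega⟩)
    have h2 : b + (n + l) ∈ Set.Icc 1 t :=
      hsub _ (by rw [hb]; exact Set.mem_Icc.2 ⟨by omega, le_refl _⟩)
    exact ⟨b, h1.1, h2.2, hb⟩
  have hkey : ∀ c ∈ Finset.Icc n (n + l + 1),
      3 ≤ (Finset.univ.filter (fun j : Fin (2 * n) => cv (Sum.inr j) = c)).card := by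
    intro c hc
    rw [Finset.mem_Icc] at hc
    have hcin : ∀ j : Fin (2 * n),
        c ∈ palette (completeBipartiteGraph (Fin (n + l)) (Fin (2 * n))) cv ce (Sum.inr j) := by
      intro j
      obtain ⟨b, hb1, hb2, hb3⟩ := hpalB j
      rw [hb3]
      exact Set.mem_Icc.2 ⟨by omega, by omega⟩
    have hedge : ∀ j : Fin (2 * n), cv (Sum.inr j) ≠ c →
        ∃ i : Fin (n + l), ce s(Sum.inl i, Sum.inr j) = c := by
      intro j hj
      rcases hcin j with hc' | ⟨e, he, hmem, rfl⟩
      · exact absurd hc'.symm hj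
      · obtain ⟨i, j', rfl⟩ := edge_form_s3 he
        rw [Sym2.mem_iff] at hmem
        have : j' = j := by rcases hmem with h' | h' <;> simp_all
        subst this
        exact ⟨i, rfl⟩
    classical
    set g : Fin (2 * n) → Fin (n + l) := fun j =>
      if h' : ∃ i : Fin (n + l), ce s(Sum.inl i, Sum.inr j) = c then h'.choose
      else ⟨0, hm⟩ with hg
    set T := Finset.univ.filter (fun j : Fin (2 * n) => ¬ cv (Sum.inr j) = c) with hT
    have hginj : Set.InjOn g T := by
      intro j hj j' hj' hgj
      rw [hT, Finset.coe_filter] at hj hj'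
      have hj1 := (Set.mem_setOf_eq ▸ hj).2
      have hj1' := (Set.mem_setOf_eq ▸ hj').2
      have hex := hedge j hj1
      have hex' := hedge j' hj1'
      have hce1 : ce s(Sum.inl (g j), Sum.inr j) = c := by
        rw [hg]; simp only [dif_pos hex]; exact hex.choose_spec
      have hce2 : ce s(Sum.inl (g j'), Sum.inr j') = c := by
        rw [hg]; simp only [dif_pos hex']; exact hex'.choose_spec
      by_contra hne
      have hEne : s(Sum.inl (g j), Sum.inr j) ≠ s(Sum.inl (g j'), Sum.inr j') := by
        intro hcon
        exact hne (Sum.inr_injective (Sym2.congr_right.mp (hgj ▸ hcon)))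
      exact hee _ _ (edge_mem _ _) (edge_mem _ _) hEne
        ⟨Sum.inl (g j), by simp, by rw [hgj]; simp⟩ (hce1.trans hce2.symm)
    have hTcard : T.card ≤ n + l := by
      have := Finset.card_le_card_of_injOn g (fun x _ => Finset.mem_univ (g x)) hginj
      simpa using this
    have hsplit := Finset.card_filter_add_card_filter_not
      (s := (Finset.univ : Finset (Fin (2 * n))))
      (p := fun j => cv (Sum.inr j) = c)
    rw [Finset.card_univ] at hsplit
    simp only [Fintype.card_fin] at hsplit
    rw [hT] at hTcard
    omega
  classical
  set S : ℕ → Finset (Fin (2 * n)) :=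
    fun c => Finset.univ.filter (fun j => cv (Sum.inr j) = c) with hS
  have hdisj : ∀ c ∈ Finset.Icc n (n + l + 1), ∀ c' ∈ Finset.Icc n (n + l + 1),
      c ≠ c' → Disjoint (S c) (S c') := by
    intro c _ c' _ hne
    rw [Finset.disjoint_left]
    intro j hj hj'
    rw [hS] at hj hj'
    simp only [Finset.mem_filter] at hj hj'
    exact hne (hj.2.symm.trans hj'.2)
  have hcard : ((Finset.Icc n (n + l + 1)).biUnion S).card
      = ∑ c ∈ Finset.Icc n (n + l + 1), (S c).card := Finset.card_biUnion hdisj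
  have hle : ((Finset.Icc n (n + l + 1)).biUnion S).card ≤ 2 * n := by
    have := Finset.card_le_card (Finset.subset_univ ((Finset.Icc n (n + l + 1)).biUnion S))
    simpa using this
  have hsum : (Finset.Icc n (n + l + 1)).card * 3
      ≤ ∑ c ∈ Finset.Icc n (n + l + 1), (S c).card := by
    have := Finset.card_nsmul_le_sum (Finset.Icc n (n + l + 1)) (fun c => (S c).card) 3 hkey
    simpa [smul_eq_mul] using this
  have hC : (Finset.Icc n (n + l + 1)).card = l + 2 := by
    rw [Nat.card_Icc]; omega
  rw [hC] at hsum
  omega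


theorem stmt3 (l : ℕ) (hl : 0 < l) :
    ∀ n : ℕ, n = l + 3 →
      (∃ t, HasIntervalTotalColoring (completeBipartiteGraph (Fin (n + l)) (Fin (2 * n))) t) ∧
      2 * n + 1 + l ≤ wtau (completeBipartiteGraph (Fin (n + l)) (Fin (2 * n))) ∧
      totalChromaticNumber (completeBipartiteGraph (Fin (n + l)) (Fin (2 * n))) = 2 * n + 1 ∧
      l ≤ wtau (completeBipartiteGraph (Fin (n + l)) (Fin (2 * n))) -
            totalChromaticNumber (completeBipartiteGraph (Fin (n + l)) (Fin (2 * n))) := by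
  intro n hn
  have hm : 0 < n + l := by omega
  have hN : 0 < 2 * n := by omega
  have hmN : n + l < 2 * n := by omega
  have hA := constrA (n + l) (2 * n) hm hN
  have hNE : {t | HasIntervalTotalColoring
      (completeBipartiteGraph (Fin (n + l)) (Fin (2 * n))) t}.Nonempty := ⟨_, hA⟩
  have hwt : 2 * n + 1 + l ≤ wtau (completeBipartiteGraph (Fin (n + l)) (Fin (2 * n))) :=
    le_csInf hNE (fun t ht => itc_ge l n hl hn t ht)
  have htc := tc_eq (n + l) (2 * n) hm hmN
  rw [htc]
  exact ⟨⟨_, hA⟩, hwt, rfl, by omega⟩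


end ITC
end

section
/- For every positive integer n, the maximum span of an interval total coloring of the hypercube Q_n equals (n+1)(n+2)/2. -/
namespace ITC

variable {V : Type*}

section Hypercube

variable {n : ℕ}

/-- Flip coordinate `i`. -/
def flip (i : Fin n) (u : Fin n → Bool) : Fin n → Bool := Function.update u i (!(u i))

lemma flip_self (i : Fin n) (u : Fin n → Bool) : flip i u i = !(u i) := by
  simp [flip]

lemma flip_ne_apply {i j : Fin n} (u : Fin n → Bool) (h : j ≠ i) : flip i u j = u j := by
  simp [flip, Function.update_of_ne h]

lemma adj_iff {u v : Fin n → Bool} : (hypercube n).Adj u v ↔ ∃ i, v = flip i u := by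
  constructor
  · rintro ⟨i, hi, huniq⟩
    refine ⟨i, funext fun j => ?_⟩
    by_cases hj : j = i
    · subst hj
      rw [flip_self]
      revert hi
      cases u j <;> cases v j <;> simp
    · have := fun h' => hj (huniq j h')
      rw [flip_ne_apply u hj]
      by_contra h'
      exact hj (huniq j (Ne.symm h'))
  · rintro ⟨i, rfl⟩
    refine ⟨i, ?_, fun j hj => ?_⟩
    · show u i ≠ flip i u i
      rw [flip_self]; cases u i <;> simp
    · by_contra h'
      exact hj (by rw [flip_ne_apply u h'])

lemma flip_inj {i j : Fin n} {u : Fin n → Bool} (h : flip i u = flip j u) : i = j := by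
  by_contra hij
  have h1 : flip i u i = flip j u i := by rw [h]
  rw [flip_self, flip_ne_apply u hij] at h1
  cases u i <;> simp_all

lemma neighborSet_eq (v : Fin n → Bool) :
    (hypercube n).neighborSet v = Set.range (fun i => flip i v) := by
  ext u
  simp only [SimpleGraph.mem_neighborSet, Set.mem_range]
  rw [adj_iff]
  exact ⟨fun ⟨i, h⟩ => ⟨i, h.symm⟩, fun ⟨i, h⟩ => ⟨i, h.symm⟩⟩

lemma deg_hypercube (v : Fin n → Bool) : deg (hypercube n) v = n := by
  rw [deg, neighborSet_eq, ← Set.image_univ,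
    Set.ncard_image_of_injective _ (fun i j h => flip_inj h), Set.ncard_univ]
  simp

lemma incident_iff {v : Fin n → Bool} {e : Sym2 (Fin n → Bool)} :
    (e ∈ (hypercube n).edgeSet ∧ v ∈ e) ↔ ∃ i, e = s(v, flip i v) := by
  constructor
  · rintro ⟨he, hv⟩
    induction e with
    | h x y =>
      rw [SimpleGraph.mem_edgeSet] at he
      rw [Sym2.mem_iff] at hv
      rcases hv with rfl | rfl
      · obtain ⟨i, rfl⟩ := adj_iff.mp he
        exact ⟨i, rfl⟩
      · obtain ⟨i, rfl⟩ := adj_iff.mp ((hypercube n).adj_symm he)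
        exact ⟨i, Sym2.eq_swap⟩
  · rintro ⟨i, rfl⟩
    refine ⟨((hypercube n).mem_edgeSet).mpr (adj_iff.mpr ⟨i, rfl⟩), Sym2.mem_mk_left _ _⟩

/-! ### The construction -/

/-- Weighted Hamming weight `∑_{v j = 1} (j+1)`. -/
def Wv (v : Fin n → Bool) : ℕ := ∑ j : Fin n, if v j then (j : ℕ) + 1 else 0

/-- Hamming weight. -/
def wt (v : Fin n → Bool) : ℕ := ∑ j : Fin n, if v j then 1 else 0

/-- Number of ones strictly above `i`. -/
def wgt (i : Fin n) (v : Fin n → Bool) : ℕ := ∑ j : Fin n, if i < j ∧ v j then 1 else 0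

/-- Offset of the edge in direction `i` at `v`. -/
def off (v : Fin n → Bool) (i : Fin n) : ℕ :=
  if v i then wgt i v else ((i : ℕ) + 1) + wgt i v

/-- The vertex coloring. -/
def cvf (v : Fin n → Bool) : ℕ := 1 + ∑ j : Fin n, if v j then (j : ℕ) + 2 else 0

lemma cvf_eq (v : Fin n → Bool) : cvf v = 1 + Wv v + wt v := by
  rw [cvf, Wv, wt, add_assoc, ← Finset.sum_add_distrib]
  congr 1
  refine Finset.sum_congr rfl fun j _ => ?_
  by_cases h : v j <;> simp [h]

lemma wt_le (v : Fin n → Bool) : wt v ≤ n := by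
  calc wt v ≤ ∑ _j : Fin n, 1 := Finset.sum_le_sum fun j _ => by by_cases h : v j <;> simp [h]
  _ = n := by simp

lemma wgt_le (i : Fin n) (v : Fin n → Bool) : (i : ℕ) + 1 + wgt i v ≤ n := by
  have h1 : wgt i v ≤ ∑ j : Fin n, if i < j then 1 else 0 := by
    refine Finset.sum_le_sum fun j _ => ?_
    by_cases h : i < j ∧ v j
    · rw [if_pos h, if_pos h.1]
    · rw [if_neg h]; positivity
  have h2 : (∑ j : Fin n, if i < j then 1 else 0) = n - 1 - (i : ℕ) := by
    rw [← Finset.card_filter]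
    have : Finset.univ.filter (fun j : Fin n => i < j) = Finset.Ioi i := by
      ext j; simp
    rw [this, Fin.card_Ioi]
  have := i.isLt
  omega

lemma off_le (v : Fin n → Bool) (i : Fin n) : off v i ≤ n := by
  have := wgt_le i v
  rw [off]; by_cases h : v i <;> simp [h] <;> omega

lemma off_lt_wt {v : Fin n → Bool} {i : Fin n} (h : v i = true) : off v i < wt v := by
  rw [off, if_pos h, wgt, wt]
  refine Finset.sum_lt_sum (fun j _ => ?_) ⟨i, Finset.mem_univ i, ?_⟩
  · by_cases hj : i < j ∧ v j
    · rw [if_pos hj, if_pos hj.2]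
    · rw [if_neg hj]; positivity
  · rw [if_pos h, if_neg (by simp)]
    omega

lemma wt_lt_off {v : Fin n → Bool} {i : Fin n} (h : v i = false) : wt v < off v i := by
  rw [off, if_neg (by simp [h]), wt]
  have hsplit : (∑ j : Fin n, if v j then 1 else 0) =
      (∑ j : Fin n, if j < i ∧ v j then 1 else 0) + wgt i v := by
    rw [wgt, ← Finset.sum_add_distrib]
    refine Finset.sum_congr rfl fun j _ => ?_
    cases hv : v j with
    | false => simp [hv]
    | true =>
      simp only [hv, and_true]
      rcases lt_trichotomy j i with hj | rfl | hj
      · rw [if_pos trivial, if_pos hj, if_neg (asymm hj), add_zero]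
      · rw [hv] at h; cases h
      · rw [if_pos trivial, if_neg (asymm hj), if_pos hj, zero_add]
  have h2 : (∑ j : Fin n, if j < i ∧ v j then 1 else 0) ≤ (i : ℕ) := by
    calc (∑ j : Fin n, if j < i ∧ v j then 1 else 0)
        ≤ ∑ j : Fin n, if j < i then 1 else 0 := by
          refine Finset.sum_le_sum fun j _ => ?_
          by_cases hj : j < i ∧ v j
          · rw [if_pos hj, if_pos hj.1]
          · rw [if_neg hj]; positivity
      _ = (i : ℕ) := by
          rw [← Finset.card_filter]
          have : Finset.univ.filter (fun j : Fin n => j < i) = Finset.Iio i := by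
            ext j; simp
          rw [this, Fin.card_Iio]
  omega

lemma off_ne_wt (v : Fin n → Bool) (i : Fin n) : off v i ≠ wt v := by
  cases h : v i
  · exact (wt_lt_off h).ne'
  · exact (off_lt_wt h).ne

lemma wgt_lt_wgt {v : Fin n → Bool} {i i' : Fin n} (hii : i < i') (h : v i' = true) :
    wgt i' v < wgt i v := by
  rw [wgt, wgt]
  refine Finset.sum_lt_sum (fun j _ => ?_) ⟨i', Finset.mem_univ i', ?_⟩
  · by_cases hj : i' < j ∧ v j
    · rw [if_pos hj, if_pos ⟨hii.trans hj.1, hj.2⟩]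
    · rw [if_neg hj]; positivity
  · rw [if_neg (fun hc => lt_irrefl i' hc.1), if_pos ⟨hii, h⟩]
    omega

lemma wgt_split {v : Fin n → Bool} {i i' : Fin n} (hii : i < i') (h : v i' = false) :
    wgt i v = (∑ j : Fin n, if (i < j ∧ j < i') ∧ v j then 1 else 0) + wgt i' v := by
  rw [wgt, wgt, ← Finset.sum_add_distrib]
  refine Finset.sum_congr rfl fun j _ => ?_
  cases hv : v j with
  | false => simp [hv]
  | true =>
    simp only [hv, and_true]
    rcases lt_trichotomy j i' with hj | rfl | hj
    · rw [if_neg (asymm hj), add_zero]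
      by_cases hij : i < j
      · rw [if_pos hij, if_pos ⟨hij, hj⟩]
      · rw [if_neg hij, if_neg (fun hc => hij hc.1)]
    · rw [hv] at h; cases h
    · rw [if_pos (hii.trans hj), if_pos hj, if_neg (fun hc => asymm hj hc.2), zero_add]

lemma off_lt_off_ff {v : Fin n → Bool} {i i' : Fin n} (hii : i < i')
    (h : v i = false) (h' : v i' = false) : off v i < off v i' := by
  have hs := wgt_split hii h'
  have hb : (∑ j : Fin n, if (i < j ∧ j < i') ∧ v j then 1 else 0) ≤ (i' : ℕ) - (i : ℕ) - 1 := by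
    calc (∑ j : Fin n, if (i < j ∧ j < i') ∧ v j then 1 else 0)
        ≤ ∑ j : Fin n, if i < j ∧ j < i' then 1 else 0 := by
          refine Finset.sum_le_sum fun j _ => ?_
          by_cases hj : (i < j ∧ j < i') ∧ v j
          · rw [if_pos hj, if_pos hj.1]
          · rw [if_neg hj]; positivity
      _ = (i' : ℕ) - (i : ℕ) - 1 := by
          rw [← Finset.card_filter]
          have : Finset.univ.filter (fun j : Fin n => i < j ∧ j < i') = Finset.Ioo i i' := by
            ext j; simp
          rw [this, Fin.card_Ioo]
  rw [off, off, if_neg (by simp [h]), if_neg (by simp [h'])]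
  have hii' : (i : ℕ) < (i' : ℕ) := hii
  omega

lemma off_inj {v : Fin n → Bool} {i i' : Fin n} (hne : i ≠ i') : off v i ≠ off v i' := by
  cases h : v i <;> cases h' : v i'
  · rcases hne.lt_or_gt with hii | hii
    · exact (off_lt_off_ff hii h h').ne
    · exact (off_lt_off_ff hii h' h).ne'
  · have h1 := wt_lt_off (v := v) h
    have h2 := off_lt_wt (v := v) h'
    omega
  · have h1 := wt_lt_off (v := v) h'
    have h2 := off_lt_wt (v := v) h
    omega
  · rcases hne.lt_or_gt with hii | hii
    · have := wgt_lt_wgt hii h'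
      rw [off, off, if_pos h, if_pos h']
      omega
    · have := wgt_lt_wgt hii h
      rw [off, off, if_pos h, if_pos h']
      omega

lemma off_cover (v : Fin n → Bool) {c : ℕ} (hc : c ≤ n) :
    c = wt v ∨ ∃ i, off v i = c := by
  classical
  set F : Finset ℕ := insert (wt v) (Finset.image (off v) Finset.univ) with hF
  have himg : (Finset.image (off v) Finset.univ).card = n := by
    rw [Finset.card_image_of_injective _ ?_, Finset.card_univ, Fintype.card_fin]
    intro i i' h
    by_contra hne
    exact off_inj hne h
  have hcard : F.card = n + 1 := by
    rw [hF, Finset.card_insert_of_notMem, himg]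
    simp only [Finset.mem_image, Finset.mem_univ, true_and]
    rintro ⟨i, hi⟩
    exact off_ne_wt v i hi
  have hsub : F ⊆ Finset.range (n + 1) := by
    intro c' hc'
    rw [hF, Finset.mem_insert] at hc'
    rw [Finset.mem_range]
    rcases hc' with rfl | hc'
    · exact Nat.lt_succ_of_le (wt_le v)
    · simp only [Finset.mem_image, Finset.mem_univ, true_and] at hc'
      obtain ⟨i, rfl⟩ := hc'
      exact Nat.lt_succ_of_le (off_le v i)
  have hFeq : F = Finset.range (n + 1) :=
    Finset.eq_of_subset_of_card_le hsub (by rw [hcard, Finset.card_range])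
  have hcF : c ∈ F := by rw [hFeq, Finset.mem_range]; omega
  rw [hF, Finset.mem_insert] at hcF
  rcases hcF with rfl | hcF
  · exact Or.inl rfl
  · simp only [Finset.mem_image, Finset.mem_univ, true_and] at hcF
    obtain ⟨i, hi⟩ := hcF
    exact Or.inr ⟨i, hi⟩

/-- The (symmetrized) edge coloring function. -/
def fe (u w : Fin n → Bool) : ℕ :=
  1 + (∑ j : Fin n, if u j ≠ w j then (j : ℕ) + 1 else if u j then (j : ℕ) + 1 else 0)
    + (∑ j : Fin n, if u j = w j ∧ u j = true ∧ ∃ k, k < j ∧ u k ≠ w k then 1 else 0)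

lemma fe_symm (u w : Fin n → Bool) : fe u w = fe w u := by
  rw [fe, fe]
  congr 1
  · congr 1
    refine Finset.sum_congr rfl fun j _ => ?_
    by_cases h : u j = w j
    · simp [h]
    · simp [h, Ne.symm h]
  · refine Finset.sum_congr rfl fun j _ => if_congr ?_ rfl rfl
    constructor
    · rintro ⟨h1, h2, k, hk, hd⟩
      exact ⟨h1.symm, h1 ▸ h2, k, hk, Ne.symm hd⟩
    · rintro ⟨h1, h2, k, hk, hd⟩
      exact ⟨h1.symm, h1 ▸ h2, k, hk, Ne.symm hd⟩

/-- The edge coloring. -/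
def cef : Sym2 (Fin n → Bool) → ℕ := Sym2.lift ⟨fe, fe_symm⟩

lemma cef_mk (u w : Fin n → Bool) : cef s(u, w) = fe u w := rfl

lemma flip_diff_iff (v : Fin n → Bool) (i j : Fin n) : (v j ≠ flip i v j) ↔ j = i := by
  by_cases hj : j = i
  · subst hj
    rw [flip_self]
    cases v j <;> simp
  · rw [flip_ne_apply v hj]
    simp [hj]

lemma cef_eval (v : Fin n → Bool) (i : Fin n) :
    cef s(v, flip i v) = 1 + Wv v + off v i := by
  classical
  set R : ℕ := ∑ j ∈ Finset.univ.erase i, (if v j then (j : ℕ) + 1 else 0) with hR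
  have e2 : Wv v = (if v i then (i : ℕ) + 1 else 0) + R := by
    rw [Wv, ← Finset.add_sum_erase _ _ (Finset.mem_univ i)]
  have e1 : cef s(v, flip i v) = 1 + (((i : ℕ) + 1) + R) + wgt i v := by
    rw [cef_mk, fe]
    congr 1
    · congr 1
      have hs1 : (∑ j : Fin n, if v j ≠ flip i v j then (j : ℕ) + 1
            else if v j then (j : ℕ) + 1 else 0)
          = ∑ j : Fin n, if j = i then (j : ℕ) + 1 else if v j then (j : ℕ) + 1 else 0 := by
        refine Finset.sum_congr rfl fun j _ => ?_
        by_cases hj : j = i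
        · rw [if_pos ((flip_diff_iff v i j).mpr hj), if_pos hj]
        · rw [if_neg (fun hd => hj ((flip_diff_iff v i j).mp hd)), if_neg hj]
      rw [hs1, ← Finset.add_sum_erase _ _ (Finset.mem_univ i), if_pos rfl]
      congr 1
      refine Finset.sum_congr rfl fun j hj => ?_
      rw [if_neg (Finset.mem_erase.mp hj).1]
    · rw [wgt]
      refine Finset.sum_congr rfl fun j _ => if_congr ?_ rfl rfl
      constructor
      · rintro ⟨h1, h2, k, hk, hd⟩
        have : k = i := (flip_diff_iff v i k).mp hd
        subst this
        exact ⟨hk, h2⟩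
      · rintro ⟨hij, hv⟩
        have hji : j ≠ i := Fin.ne_of_gt hij
        exact ⟨(flip_ne_apply v hji).symm, hv, i, hij, (flip_diff_iff v i i).mpr rfl⟩
  rw [e1, e2, off]
  cases hvi : v i <;> simp [hvi] <;> omega

lemma cvf_flip_ne (v : Fin n → Bool) (i : Fin n) : cvf v ≠ cvf (flip i v) := by
  classical
  have hsplit : ∀ u : Fin n → Bool, cvf u = 1 + ((if u i then (i : ℕ) + 2 else 0)
      + ∑ j ∈ Finset.univ.erase i, (if u j then (j : ℕ) + 2 else 0)) := by
    intro u
    rw [cvf, ← Finset.add_sum_erase _ _ (Finset.mem_univ i)]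
  have hR : (∑ j ∈ Finset.univ.erase i, (if flip i v j then (j : ℕ) + 2 else 0))
      = ∑ j ∈ Finset.univ.erase i, (if v j then (j : ℕ) + 2 else 0) := by
    refine Finset.sum_congr rfl fun j hj => ?_
    rw [flip_ne_apply v (Finset.mem_erase.mp hj).1]
  rw [hsplit v, hsplit (flip i v), hR, flip_self]
  cases hvi : v i <;> simp [hvi] <;> omega

lemma palette_eq (v : Fin n → Bool) :
    palette (hypercube n) cvf cef v = Set.Icc (1 + Wv v) (1 + Wv v + n) := by
  ext c
  simp only [palette, Set.mem_insert_iff, Set.mem_setOf_eq, Set.mem_Icc]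
  constructor
  · rintro (rfl | ⟨e, he, hv, rfl⟩)
    · rw [cvf_eq]
      have := wt_le v
      omega
    · obtain ⟨i, rfl⟩ := incident_iff.mp ⟨he, hv⟩
      rw [cef_eval]
      have := off_le v i
      omega
  · rintro ⟨h1, h2⟩
    have hc : c - (1 + Wv v) ≤ n := by omega
    rcases off_cover v hc with hw | ⟨i, hi⟩
    · left
      rw [cvf_eq]
      omega
    · right
      refine ⟨s(v, flip i v), (incident_iff.mpr ⟨i, rfl⟩).1, (incident_iff.mpr ⟨i, rfl⟩).2, ?_⟩
      rw [cef_eval, hi]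
      omega

lemma Wv_le (v : Fin n → Bool) : 2 * Wv v ≤ n * (n + 1) := by
  have h1 : Wv v ≤ ∑ j : Fin n, ((j : ℕ) + 1) := by
    refine Finset.sum_le_sum fun j _ => ?_
    by_cases h : v j <;> simp [h]
  have h2 : (∑ j : Fin n, ((j : ℕ) + 1)) = (∑ j ∈ Finset.range n, j) + n := by
    rw [Fin.sum_univ_eq_sum_range (fun j => j + 1), Finset.sum_add_distrib]
    simp
  have h3 : (∑ j ∈ Finset.range (n + 1), j) * 2 = (n + 1) * n := by
    simpa using Finset.sum_range_id_mul_two (n + 1)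
  have h4 : (∑ j ∈ Finset.range (n + 1), j) = (∑ j ∈ Finset.range n, j) + n :=
    Finset.sum_range_succ _ n
  have h5 : n * (n + 1) = (n + 1) * n := Nat.mul_comm _ _
  omega

/-- Subset sums of `{1, …, n}` cover `[0, n(n+1)/2]`. -/
lemma exists_Wv : ∀ (n : ℕ) (M : ℕ), 2 * M ≤ n * (n + 1) → ∃ v : Fin n → Bool, Wv v = M := by
  intro n
  induction n with
  | zero =>
    intro M hM
    refine ⟨fun j => false, ?_⟩
    simp only [Nat.zero_mul] at hM
    rw [Wv]
    simp
    omega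
  | succ n ih =>
    intro M hM
    have hsnoc : ∀ (v' : Fin n → Bool) (b : Bool),
        Wv (Fin.snoc v' b) = Wv v' + (if b then n + 1 else 0) := by
      intro v' b
      rw [Wv, Fin.sum_univ_castSucc]
      congr 1
      · rw [Wv]
        refine Finset.sum_congr rfl fun j _ => ?_
        rw [Fin.snoc_castSucc]
        simp
      · rw [Fin.snoc_last]
        simp
    by_cases hM' : 2 * M ≤ n * (n + 1)
    · obtain ⟨v', hv'⟩ := ih M hM'
      exact ⟨Fin.snoc v' false, by rw [hsnoc, hv']; simp⟩
    · obtain ⟨k, hk⟩ := Nat.even_mul_succ_self n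
      have hexp : (n + 1) * (n + 1 + 1) = n * (n + 1) + 2 * (n + 1) := by ring
      have hnk : n ≤ k := by nlinarith
      have hM1 : n + 1 ≤ M := by omega
      obtain ⟨v', hv'⟩ := ih (M - (n + 1)) (by omega)
      refine ⟨Fin.snoc v' true, ?_⟩
      rw [hsnoc, hv']
      simp
      omega

/-- The lower bound: the constructed coloring. -/
lemma lower_bound (n : ℕ) : HasIntervalTotalColoring (hypercube n) ((n + 1) * (n + 2) / 2) := by
  classical
  obtain ⟨k, hk⟩ := Nat.even_mul_succ_self (n + 1)
  have hk2 : (n + 1) * (n + 2) = k + k := by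
    rw [show (n + 1) * (n + 2) = (n + 1) * (n + 1 + 1) from by ring, hk]
  have hexp : (n + 1) * (n + 2) = n * (n + 1) + 2 * (n + 1) := by ring
  refine ⟨cvf, cef, ⟨?_, ?_, ?_⟩, ?_, ?_, ?_, ?_⟩
  · -- vertex-vertex
    intro u v huv
    obtain ⟨i, rfl⟩ := adj_iff.mp huv
    exact cvf_flip_ne u i
  · -- edge-edge
    intro e f he hf hef ⟨w, hwe, hwf⟩
    obtain ⟨i, rfl⟩ := incident_iff.mp ⟨he, hwe⟩
    obtain ⟨i', rfl⟩ := incident_iff.mp ⟨hf, hwf⟩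
    have hii : i ≠ i' := by
      rintro rfl
      exact hef rfl
    rw [cef_eval, cef_eval]
    have := off_inj (v := w) hii
    omega
  · -- vertex-edge
    intro v e he hv
    obtain ⟨i, rfl⟩ := incident_iff.mp ⟨he, hv⟩
    rw [cef_eval, cvf_eq]
    have := off_ne_wt v i
    omega
  · -- vertex color range
    intro v
    rw [cvf_eq, Set.mem_Icc]
    have h1 := Wv_le v
    have h2 := wt_le v
    omega
  · -- edge color range
    intro e he
    induction e with
    | h x y =>
      obtain ⟨i, rfl⟩ := adj_iff.mp (((hypercube n).mem_edgeSet).mp he)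
      rw [cef_eval, Set.mem_Icc]
      have h1 := Wv_le x
      have h2 := off_le x i
      omega
  · -- all colors used
    intro c hc
    rw [Set.mem_Icc] at hc
    obtain ⟨M, hM1, hM2, hM3⟩ : ∃ M, 2 * M ≤ n * (n + 1) ∧ M ≤ c - 1 ∧ c - 1 ≤ M + n := by
      refine ⟨min (c - 1) (n * (n + 1) / 2), ?_, ?_, ?_⟩ <;>
        obtain ⟨m, hm⟩ := Nat.even_mul_succ_self n <;> omega
    obtain ⟨v, hv⟩ := exists_Wv n M hM1
    have hcmem : c ∈ palette (hypercube n) cvf cef v := by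
      rw [palette_eq, Set.mem_Icc, hv]
      omega
    rcases hcmem with h | h
    · exact Or.inl ⟨v, h.symm⟩
    · obtain ⟨e, he, hve, hce⟩ := h
      exact Or.inr ⟨e, he, hce⟩
  · -- interval palettes
    intro v
    refine ⟨1 + Wv v, ?_⟩
    rw [palette_eq, deg_hypercube]

/-- The upper bound. -/
lemma upper_bound (n t : ℕ) (h : HasIntervalTotalColoring (hypercube n) t) :
    t ≤ (n + 1) * (n + 2) / 2 := by
  classical
  obtain ⟨cv, ce, ⟨hvv, hee, hve⟩, hcv, hce, hcover, hpal⟩ := h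
  choose a ha using hpal
  simp only [deg_hypercube] at ha
  have hpal_sub : ∀ v, palette (hypercube n) cv ce v ⊆ Set.Icc 1 t := by
    intro v c hc
    rcases hc with rfl | ⟨e, he, hv, rfl⟩
    · exact hcv v
    · exact hce e he
  have ha1 : ∀ v, 1 ≤ a v := by
    intro v
    have : a v ∈ palette (hypercube n) cv ce v := by
      rw [ha v, Set.mem_Icc]
      omega
    exact (Set.mem_Icc.mp (hpal_sub v this)).1
  have hedge_bound : ∀ e (v : Fin n → Bool), e ∈ (hypercube n).edgeSet → v ∈ e →
      a v ≤ ce e ∧ ce e ≤ a v + n := by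
    intro e v he hv
    have : ce e ∈ palette (hypercube n) cv ce v := Or.inr ⟨e, he, hv, rfl⟩
    rw [ha v, Set.mem_Icc] at this
    exact this
  have hoff_ne : ∀ (v : Fin n → Bool) (i i' : Fin n), i ≠ i' →
      ce s(v, flip i v) ≠ ce s(v, flip i' v) := by
    intro v i i' hne
    refine hee _ _ (incident_iff.mpr ⟨i, rfl⟩).1 (incident_iff.mpr ⟨i', rfl⟩).1 ?_
      ⟨v, Sym2.mem_mk_left _ _, Sym2.mem_mk_left _ _⟩
    intro heq
    exact hne (flip_inj (Sym2.congr_right.mp heq))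
  have key : ∀ d (u v : Fin n → Bool), (Finset.univ.filter fun j => u j ≠ v j).card = d →
      2 * a v + d * (d + 1) ≤ 2 * a u + 2 * d * (n + 1) := by
    intro d
    induction d with
    | zero =>
      intro u v hd
      rw [Finset.card_eq_zero] at hd
      have huv : u = v := by
        funext j
        by_contra hj
        have hjm : j ∈ Finset.univ.filter fun j => u j ≠ v j := by simp [hj]
        rw [hd] at hjm
        exact absurd hjm (Finset.notMem_empty j)
      subst huv
      omega
    | succ d ih =>
      intro u v hd
      have hex : ∃ i ∈ Finset.univ.filter (fun j => u j ≠ v j),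
          a v + d ≤ ce s(v, flip i v) := by
        by_contra hcon
        push_neg at hcon
        have himg : (Finset.univ.filter (fun j => u j ≠ v j)).image
            (fun i => ce s(v, flip i v)) ⊆ Finset.Ico (a v) (a v + d) := by
          intro c hc
          simp only [Finset.mem_image] at hc
          obtain ⟨i, hiS, rfl⟩ := hc
          rw [Finset.mem_Ico]
          exact ⟨(hedge_bound _ v (incident_iff.mpr ⟨i, rfl⟩).1 (Sym2.mem_mk_left _ _)).1,
            hcon i hiS⟩
        have hcard : ((Finset.univ.filter (fun j => u j ≠ v j)).image
            (fun i => ce s(v, flip i v))).card = d + 1 := by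
          rw [Finset.card_image_of_injOn, hd]
          intro i _ i' _ hcc
          by_contra hne
          exact hoff_ne v i i' hne hcc
        have hle := Finset.card_le_card himg
        rw [hcard, Nat.card_Ico] at hle
        omega
      obtain ⟨i, hiS, hkey⟩ := hex
      simp only [Finset.mem_filter, Finset.mem_univ, true_and] at hiS
      have hSw : (Finset.univ.filter fun j => u j ≠ flip i v j).card = d := by
        have hset : (Finset.univ.filter fun j => u j ≠ flip i v j)
            = (Finset.univ.filter fun j => u j ≠ v j).erase i := by
          ext j
          simp only [Finset.mem_filter, Finset.mem_univ, true_and, Finset.mem_erase]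
          by_cases hj : j = i
          · subst hj
            rw [flip_self]
            have huj : u j = !(v j) := by revert hiS; cases u j <;> cases v j <;> simp
            simp [huj]
          · rw [flip_ne_apply v hj]
            simp [hj]
        rw [hset, Finset.card_erase_of_mem (by simp [hiS]), hd]
        omega
      have hIH := ih u (flip i v) hSw
      have hup : ce s(v, flip i v) ≤ a (flip i v) + n :=
        (hedge_bound _ (flip i v) (incident_iff.mpr ⟨i, rfl⟩).1 (Sym2.mem_mk_right _ _)).2
      have e1 : (d + 1) * (d + 1 + 1) = d * (d + 1) + 2 * d + 2 := by ring
      have e2 : 2 * (d + 1) * (n + 1) = 2 * d * (n + 1) + 2 * n + 2 := by ring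
      omega
  have ht1 : 1 ≤ t := by
    have hm := Set.mem_Icc.mp (hcv fun _ => false)
    omega
  have hcol_mem : ∀ c ∈ Set.Icc 1 t, ∃ v, c ∈ palette (hypercube n) cv ce v := by
    intro c hc
    rcases hcover c hc with ⟨v, hv⟩ | ⟨e, he, hcee⟩
    · exact ⟨v, Or.inl hv.symm⟩
    · induction e with
      | h x y => exact ⟨x, Or.inr ⟨s(x, y), he, Sym2.mem_mk_left _ _, hcee⟩⟩
  obtain ⟨u1, hu1⟩ := hcol_mem 1 ⟨le_refl 1, ht1⟩
  rw [ha u1, Set.mem_Icc] at hu1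
  have hau1 : a u1 = 1 := by
    have := ha1 u1
    omega
  obtain ⟨vt, hvt⟩ := hcol_mem t ⟨ht1, le_refl t⟩
  rw [ha vt, Set.mem_Icc] at hvt
  have hdn : (Finset.univ.filter fun j => u1 j ≠ vt j).card ≤ n := by
    calc (Finset.univ.filter fun j => u1 j ≠ vt j).card ≤ (Finset.univ : Finset (Fin n)).card :=
        Finset.card_filter_le _ _
      _ = n := by simp
  have hk := key (Finset.univ.filter fun j => u1 j ≠ vt j).card u1 vt rfl
  rw [hau1] at hk
  generalize hdd : (Finset.univ.filter fun j => u1 j ≠ vt j).card = d at hk hdn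
  obtain ⟨c, hc⟩ : ∃ c, n = d + c := ⟨n - d, by omega⟩
  have hq : 2 * d * (n + 1) + c * (c + 1) = n * (n + 1) + d * (d + 1) := by
    subst hc
    ring
  obtain ⟨k, hk2⟩ := Nat.even_mul_succ_self (n + 1)
  have hk3 : (n + 1) * (n + 2) = k + k := by
    rw [show (n + 1) * (n + 2) = (n + 1) * (n + 1 + 1) from by ring, hk2]
  have hexp : (n + 1) * (n + 2) = n * (n + 1) + 2 * (n + 1) := by ring
  omega

end Hypercube

theorem stmt8 (n : ℕ) (hn : 0 < n) :
    Wtau (hypercube n) = (n + 1) * (n + 2) / 2 := by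
  apply le_antisymm
  · exact csSup_le ⟨_, lower_bound n⟩ (fun t ht => upper_bound n t ht)
  · exact le_csSup ⟨(n + 1) * (n + 2) / 2, fun t ht => upper_bound n t ht⟩ (lower_bound n)

end ITC
end

section
/- For positive integers m, n with (m,n) ≠ (1,1), the maximum span of an interval total coloring of K_{m,n} is m+n+2; and W_τ(K_{1,1}) = 3. -/
namespace ITC

variable {V : Type*}

-- basic lemmas about K_{m,n}
variable {m n : ℕ}

abbrev KB (m n : ℕ) := completeBipartiteGraph (Fin m) (Fin n)

lemma KB_adj_iff (u v : Fin m ⊕ Fin n) : (KB m n).Adj u v ↔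
    ((∃ i j, u = .inl i ∧ v = .inr j) ∨ (∃ i j, u = .inr j ∧ v = .inl i)) := by
  cases u <;> cases v <;> simp [completeBipartiteGraph]

lemma KB_edge_mem (i : Fin m) (j : Fin n) :
    s(Sum.inl i, Sum.inr j) ∈ (KB m n).edgeSet := by
  simp [completeBipartiteGraph]

lemma KB_edge_struct {e : Sym2 (Fin m ⊕ Fin n)} (he : e ∈ (KB m n).edgeSet) :
    ∃ i j, e = s(Sum.inl i, Sum.inr j) := by
  induction e with
  | _ x y =>
    rw [SimpleGraph.mem_edgeSet, KB_adj_iff] at he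
    rcases he with ⟨i, j, hx, hy⟩ | ⟨i, j, hx, hy⟩
    · exact ⟨i, j, by rw [hx, hy]⟩
    · exact ⟨i, j, by rw [hx, hy, Sym2.eq_swap]⟩

lemma KB_deg_inl (i : Fin m) : deg (KB m n) (Sum.inl i) = n := by
  have h : (KB m n).neighborSet (Sum.inl i) = Set.range (Sum.inr : Fin n → Fin m ⊕ Fin n) := by
    ext w
    cases w <;> simp [SimpleGraph.neighborSet, completeBipartiteGraph]
  rw [deg, h, ← Set.image_univ, Set.ncard_image_of_injective _ Sum.inr_injective,
    Set.ncard_univ, Nat.card_eq_fintype_card, Fintype.card_fin]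

lemma KB_deg_inr (j : Fin n) : deg (KB m n) (Sum.inr j) = m := by
  have h : (KB m n).neighborSet (Sum.inr j) = Set.range (Sum.inl : Fin m → Fin m ⊕ Fin n) := by
    ext w
    cases w <;> simp [SimpleGraph.neighborSet, completeBipartiteGraph]
  rw [deg, h, ← Set.image_univ, Set.ncard_image_of_injective _ Sum.inl_injective,
    Set.ncard_univ, Nat.card_eq_fintype_card, Fintype.card_fin]

lemma KB_edge_at_inl {m n : ℕ} {e : Sym2 (Fin m ⊕ Fin n)} {i : Fin m}
    (he : e ∈ (KB m n).edgeSet) (hi : Sum.inl i ∈ e) :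
    ∃ j, e = s(Sum.inl i, Sum.inr j) := by
  obtain ⟨i', j, rfl⟩ := KB_edge_struct he
  rcases Sym2.mem_iff.mp hi with h | h
  · exact ⟨j, by rw [Sum.inl.inj h]⟩
  · exact absurd h (by simp)

lemma KB_edge_at_inr {m n : ℕ} {e : Sym2 (Fin m ⊕ Fin n)} {j : Fin n}
    (he : e ∈ (KB m n).edgeSet) (hj : Sum.inr j ∈ e) :
    ∃ i, e = s(Sum.inl i, Sum.inr j) := by
  obtain ⟨i, j', rfl⟩ := KB_edge_struct he
  rcases Sym2.mem_iff.mp hj with h | h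
  · exact absurd h (by simp)
  · exact ⟨i, by rw [Sum.inr.inj h]⟩

lemma K11_has : HasIntervalTotalColoring (KB 1 1) 3 := by
  refine ⟨Sum.elim (fun _ => 1) (fun _ => 3), fun _ => 2, ⟨?_, ?_, ?_⟩, ?_, ?_, ?_, ?_⟩
  · intro u v huv
    rw [KB_adj_iff] at huv
    rcases huv with ⟨i, j, rfl, rfl⟩ | ⟨i, j, rfl, rfl⟩ <;> simp
  · intro e f he hf hne _
    exfalso
    apply hne
    obtain ⟨i, j, rfl⟩ := KB_edge_struct he
    obtain ⟨i', j', rfl⟩ := KB_edge_struct hf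
    rw [Subsingleton.elim i i', Subsingleton.elim j j']
  · intro v e he hv
    obtain ⟨i, j, rfl⟩ := KB_edge_struct he
    cases v <;> simp
  · intro v; cases v <;> simp
  · intro e _; simp
  · intro c hc
    simp only [Set.mem_Icc] at hc
    have : c = 1 ∨ c = 2 ∨ c = 3 := by omega
    rcases this with rfl | rfl | rfl
    · exact Or.inl ⟨Sum.inl 0, rfl⟩
    · exact Or.inr ⟨s(Sum.inl 0, Sum.inr 0), KB_edge_mem _ _, rfl⟩
    · exact Or.inl ⟨Sum.inr 0, rfl⟩
  · intro v
    cases v with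
    | inl i =>
      refine ⟨1, ?_⟩
      rw [KB_deg_inl]
      ext c
      simp only [palette, Set.mem_insert_iff, Set.mem_setOf_eq, Sum.elim_inl, Set.mem_Icc]
      constructor
      · rintro (rfl | ⟨e, he, hv, rfl⟩) <;> omega
      · intro hc
        have : c = 1 ∨ c = 2 := by omega
        rcases this with rfl | rfl
        · exact Or.inl rfl
        · exact Or.inr ⟨s(Sum.inl i, Sum.inr 0), KB_edge_mem _ _, by simp, rfl⟩
    | inr j =>
      refine ⟨2, ?_⟩
      rw [KB_deg_inr]
      ext c
      simp only [palette, Set.mem_insert_iff, Set.mem_setOf_eq, Sum.elim_inr, Set.mem_Icc]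
      constructor
      · rintro (rfl | ⟨e, he, hv, rfl⟩) <;> omega
      · intro hc
        have : c = 2 ∨ c = 3 := by omega
        rcases this with rfl | rfl
        · exact Or.inr ⟨s(Sum.inl 0, Sum.inr j), KB_edge_mem _ _, by simp, rfl⟩
        · exact Or.inl rfl

lemma KB_ub {m n : ℕ} (hm : 0 < m) (hn : 0 < n) {t : ℕ}
    (h : HasIntervalTotalColoring (KB m n) t) :
    t ≤ m + n + 2 ∧ (m = 1 → n = 1 → t ≤ 3) := by
  obtain ⟨cv, ce, ⟨hvv, hee, hve⟩, hcv, hce, hall, hpal⟩ := h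
  set G := KB m n with hG
  set P := palette G cv ce with hP
  have hmemP : ∀ v c, c ∈ P v ↔ (c = cv v ∨ ∃ e ∈ G.edgeSet, v ∈ e ∧ ce e = c) := by
    intro v c
    simp [hP, palette, Set.mem_insert_iff]
  have hpos : ∀ v c, c ∈ P v → 1 ≤ c ∧ c ≤ t := by
    intro v c hc
    rcases (hmemP v c).mp hc with rfl | ⟨e, he, -, rfl⟩
    · exact hcv v
    · exact hce e he
  have hedgeP : ∀ (i : Fin m) (j : Fin n),
      ce s(Sum.inl i, Sum.inr j) ∈ P (Sum.inl i) ∧ ce s(Sum.inl i, Sum.inr j) ∈ P (Sum.inr j) := by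
    intro i j
    constructor <;> rw [hmemP] <;> right
    · exact ⟨_, KB_edge_mem i j, by simp, rfl⟩
    · exact ⟨_, KB_edge_mem i j, by simp, rfl⟩
  have ht1 : 1 ≤ t := le_trans (hcv (Sum.inl ⟨0, hm⟩)).1 (hcv (Sum.inl ⟨0, hm⟩)).2
  have hfind : ∀ c, 1 ≤ c → c ≤ t → ∃ v, c ∈ P v := by
    intro c h1 h2
    rcases hall c ⟨h1, h2⟩ with ⟨v, rfl⟩ | ⟨e, he, rfl⟩
    · exact ⟨v, (hmemP v _).mpr (Or.inl rfl)⟩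
    · obtain ⟨i, j, rfl⟩ := KB_edge_struct he
      exact ⟨Sum.inl i, (hmemP _ _).mpr (Or.inr ⟨_, he, by simp, rfl⟩)⟩
  obtain ⟨u, hu⟩ := hfind 1 le_rfl ht1
  obtain ⟨w, hw⟩ := hfind t ht1 le_rfl
  obtain ⟨au, hau⟩ := hpal u
  obtain ⟨aw, haw⟩ := hpal w

  have hau1 : au = 1 := by
    have h1 : au ≤ 1 := by
      have := hau ▸ hu
      exact (Set.mem_Icc.mp this).1
    have h2 : 1 ≤ au := (hpos u au (hau ▸ Set.mem_Icc.mpr ⟨le_rfl, Nat.le_add_right _ _⟩)).1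
    omega
  have hawt : aw + deg G w = t := by
    have h1 : t ≤ aw + deg G w := (Set.mem_Icc.mp (haw ▸ hw)).2
    have h2 : aw + deg G w ≤ t :=
      (hpos w _ (haw ▸ Set.mem_Icc.mpr ⟨Nat.le_add_right _ _, le_rfl⟩)).2
    omega
  subst hau1
  -- helper to extract an edge color from the palette of an inl vertex
  have hextractL : ∀ (i' : Fin m) c, c ∈ P (Sum.inl i') → c ≠ cv (Sum.inl i') →
      ∃ j', ce s(Sum.inl i', Sum.inr j') = c := by
    intro i' c hc hne
    rcases (hmemP _ _).mp hc with rfl | ⟨e, he, hmem, rfl⟩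
    · exact absurd rfl hne
    · obtain ⟨i'', j', rfl⟩ := KB_edge_struct he
      rcases Sym2.mem_iff.mp hmem with h1 | h1
      · exact ⟨j', by rw [← Sum.inl.inj h1]⟩
      · exact absurd h1 (by simp)
  have hextractR : ∀ (j' : Fin n) c, c ∈ P (Sum.inr j') → c ≠ cv (Sum.inr j') →
      ∃ i', ce s(Sum.inl i', Sum.inr j') = c := by
    intro j' c hc hne
    rcases (hmemP _ _).mp hc with rfl | ⟨e, he, hmem, rfl⟩
    · exact absurd rfl hne
    · obtain ⟨i', j'', rfl⟩ := KB_edge_struct he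
      rcases Sym2.mem_iff.mp hmem with h1 | h1
      · exact absurd h1 (by simp)
      · exact ⟨i', by rw [← Sum.inr.inj h1]⟩
  rcases u with i | j <;> rcases w with i' | j'
  · -- both left
    rw [hG, KB_deg_inl] at hau
    rw [hG, KB_deg_inl] at hawt
    -- find an edge at inl i' with big color
    have hbig : ∃ j', ce s(Sum.inl i', Sum.inr j') + 1 ≥ t := by
      by_cases hcvw : cv (Sum.inl i') = t
      · have hpmem : aw + (n - 1) ∈ P (Sum.inl i') := by
          rw [haw, hG, KB_deg_inl, Set.mem_Icc]; omega
        obtain ⟨j', hj'⟩ := hextractL i' _ hpmem (by omega)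
        exact ⟨j', by omega⟩
      · obtain ⟨j', hj'⟩ := hextractL i' t hw (fun hh => hcvw hh.symm)
        exact ⟨j', by omega⟩
    obtain ⟨j', hj'⟩ := hbig
    obtain ⟨b, hb⟩ := hpal (Sum.inr j')
    rw [hG, KB_deg_inr] at hb
    have h1 := Set.mem_Icc.mp (hb ▸ (hedgeP i' j').2)
    have h2 := Set.mem_Icc.mp (hb ▸ (hedgeP i j').2)
    have h3 := Set.mem_Icc.mp (hau ▸ (hedgeP i j').1)
    refine ⟨by omega, ?_⟩
    intro hm1 hn1
    subst hm1
    have : i = i' := Subsingleton.elim i i'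
    subst this
    have := Set.mem_Icc.mp (hau ▸ hw)
    omega
  · -- u left, w right: adjacent
    rw [hG, KB_deg_inl] at hau
    rw [hG, KB_deg_inr] at hawt
    have h1 := Set.mem_Icc.mp (hau ▸ (hedgeP i j').1)
    have h2 := Set.mem_Icc.mp (haw ▸ (hedgeP i j').2)
    exact ⟨by omega, fun _ _ => by omega⟩
  · -- u right, w left
    rw [hG, KB_deg_inr] at hau
    rw [hG, KB_deg_inl] at hawt
    have h1 := Set.mem_Icc.mp (hau ▸ (hedgeP i' j).2)
    have h2 := Set.mem_Icc.mp (haw ▸ (hedgeP i' j).1)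
    exact ⟨by omega, fun _ _ => by omega⟩
  · -- both right
    rw [hG, KB_deg_inr] at hau
    rw [hG, KB_deg_inr] at hawt
    have hbig : ∃ i', ce s(Sum.inl i', Sum.inr j') + 1 ≥ t := by
      by_cases hcvw : cv (Sum.inr j') = t
      · have hpmem : aw + (m - 1) ∈ P (Sum.inr j') := by
          rw [haw, hG, KB_deg_inr, Set.mem_Icc]; omega
        obtain ⟨i', hi'⟩ := hextractR j' _ hpmem (by omega)
        exact ⟨i', by omega⟩
      · obtain ⟨i', hi'⟩ := hextractR j' t hw (fun hh => hcvw hh.symm)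
        exact ⟨i', by omega⟩
    obtain ⟨i', hi'⟩ := hbig
    obtain ⟨b, hb⟩ := hpal (Sum.inl i')
    rw [hG, KB_deg_inl] at hb
    have h1 := Set.mem_Icc.mp (hb ▸ (hedgeP i' j').1)
    have h2 := Set.mem_Icc.mp (hb ▸ (hedgeP i' j).1)
    have h3 := Set.mem_Icc.mp (hau ▸ (hedgeP i' j).2)
    refine ⟨by omega, ?_⟩
    intro hm1 hn1
    subst hn1
    have : j = j' := Subsingleton.elim j j'
    subst this
    have := Set.mem_Icc.mp (hau ▸ hw)
    omega

def EColor (m n : ℕ) (i : Fin m) (j : Fin n) : ℕ :=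
  if (j:ℕ)+1 = n then (i:ℕ)+n+2 else (i:ℕ)+(j:ℕ)+2

def cvN (m n : ℕ) : Fin m ⊕ Fin n → ℕ :=
  Sum.elim (fun i => (i:ℕ)+n+1) (fun j => if (j:ℕ)+1 = n then m+n+2 else (j:ℕ)+1)

def ceN (m n : ℕ) : Sym2 (Fin m ⊕ Fin n) → ℕ :=
  Sym2.lift ⟨fun u v => match u, v with
    | .inl i, .inr j => EColor m n i j
    | .inr j, .inl i => EColor m n i j
    | _, _ => 0,
    by intro u v; cases u <;> cases v <;> rfl⟩

lemma ceN_mk (m n : ℕ) (i : Fin m) (j : Fin n) :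
    ceN m n s(Sum.inl i, Sum.inr j) = EColor m n i j := rfl

lemma KBn_has (m n : ℕ) (hm : 0 < m) (hn : 2 ≤ n) :
    HasIntervalTotalColoring (KB m n) (m+n+2) := by
  refine ⟨cvN m n, ceN m n, ⟨?_, ?_, ?_⟩, ?_, ?_, ?_, ?_⟩
  · -- proper vertex coloring
    intro u v huv
    rw [KB_adj_iff] at huv
    rcases huv with ⟨i, j, rfl, rfl⟩ | ⟨i, j, rfl, rfl⟩ <;>
    · have hi := i.isLt; have hj := j.isLt
      simp only [cvN, Sum.elim_inl, Sum.elim_inr]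
      split_ifs <;> omega
  · -- proper edge coloring
    intro e f he hf hne hshare
    obtain ⟨i, j, rfl⟩ := KB_edge_struct he
    obtain ⟨i', j', rfl⟩ := KB_edge_struct hf
    have hij : ¬(i = i' ∧ j = j') := by rintro ⟨rfl, rfl⟩; exact hne rfl
    have hcase : i = i' ∨ j = j' := by
      obtain ⟨w, hw1, hw2⟩ := hshare
      rcases Sym2.mem_iff.mp hw1 with rfl | rfl
      · rcases Sym2.mem_iff.mp hw2 with h | h
        · exact Or.inl (Sum.inl.inj h)
        · exact absurd h (by simp)
      · rcases Sym2.mem_iff.mp hw2 with h | h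
        · exact absurd h (by simp)
        · exact Or.inr (Sum.inr.inj h)
    simp only [ceN_mk]
    have hi := i.isLt; have hj := j.isLt; have hi' := i'.isLt; have hj' := j'.isLt
    rcases hcase with rfl | rfl
    · have hjj : (j:ℕ) ≠ (j':ℕ) := fun hh => hij ⟨rfl, Fin.val_injective hh⟩
      simp only [EColor]
      split_ifs <;> omega
    · have hii : (i:ℕ) ≠ (i':ℕ) := fun hh => hij ⟨Fin.val_injective hh, rfl⟩
      simp only [EColor]
      split_ifs <;> omega
  · -- vertex-edge
    intro v e he hv
    obtain ⟨i, j, rfl⟩ := KB_edge_struct he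
    have hi := i.isLt; have hj := j.isLt
    rcases Sym2.mem_iff.mp hv with rfl | rfl
    · simp only [cvN, ceN_mk, EColor, Sum.elim_inl]
      split_ifs <;> omega
    · simp only [cvN, ceN_mk, EColor, Sum.elim_inr]
      split_ifs <;> omega
  · -- cv bounds
    intro v
    rcases v with i | j <;> simp only [cvN, Sum.elim_inl, Sum.elim_inr, Set.mem_Icc]
    · have := i.isLt; omega
    · have := j.isLt; split_ifs <;> omega
  · -- ce bounds
    intro e he
    obtain ⟨i, j, rfl⟩ := KB_edge_struct he
    have := i.isLt; have := j.isLt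
    simp only [ceN_mk, EColor, Set.mem_Icc]
    split_ifs <;> omega
  · -- all colors used
    intro c hc
    simp only [Set.mem_Icc] at hc
    by_cases h1 : c = 1
    · subst h1
      refine Or.inl ⟨Sum.inr ⟨0, by omega⟩, ?_⟩
      simp only [cvN, Sum.elim_inr]
      rw [if_neg (show ¬((0:ℕ)+1 = n) by omega)]
    · by_cases h2 : c ≤ n
      · refine Or.inr ⟨s(Sum.inl ⟨0, hm⟩, Sum.inr ⟨c-2, by omega⟩), KB_edge_mem _ _, ?_⟩
        simp only [ceN_mk, EColor]
        rw [if_neg (show ¬(c-2+1 = n) by omega)]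
        show 0+(c-2)+2 = c
        omega
      · by_cases h3 : c ≤ m + n
        · refine Or.inl ⟨Sum.inl ⟨c-n-1, by omega⟩, ?_⟩
          simp only [cvN, Sum.elim_inl]
          show c-n-1+n+1 = c
          omega
        · by_cases h4 : c = m+n+1
          · refine Or.inr ⟨s(Sum.inl ⟨m-1, by omega⟩, Sum.inr ⟨n-1, by omega⟩), KB_edge_mem _ _, ?_⟩
            simp only [ceN_mk, EColor]
            rw [if_pos (show (n-1:ℕ)+1 = n by omega)]
            show m-1+n+2 = c
            omega
          · refine Or.inl ⟨Sum.inr ⟨n-1, by omega⟩, ?_⟩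
            simp only [cvN, Sum.elim_inr]
            rw [if_pos (show (n-1:ℕ)+1 = n by omega)]
            omega
  · -- palettes
    intro v
    cases v with
    | inl i =>
      refine ⟨(i:ℕ)+2, ?_⟩
      rw [KB_deg_inl]
      have hi := i.isLt
      ext c
      simp only [palette, Set.mem_insert_iff, Set.mem_setOf_eq, cvN, Sum.elim_inl, Set.mem_Icc]
      constructor
      · rintro (rfl | ⟨e, he, hv, rfl⟩)
        · omega
        · obtain ⟨j, rfl⟩ := KB_edge_at_inl he hv
          have hj := j.isLt
          simp only [ceN_mk, EColor]
          split_ifs <;> omega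
      · intro hcc
        by_cases hc1 : c = (i:ℕ)+n+1
        · exact Or.inl hc1
        · right
          by_cases hc2 : c = (i:ℕ)+n+2
          · refine ⟨s(Sum.inl i, Sum.inr ⟨n-1, by omega⟩), KB_edge_mem _ _, by simp, ?_⟩
            simp only [ceN_mk, EColor]
            rw [if_pos (show (n-1:ℕ)+1 = n by omega)]
            omega
          · refine ⟨s(Sum.inl i, Sum.inr ⟨c-(i:ℕ)-2, by omega⟩), KB_edge_mem _ _, by simp, ?_⟩
            simp only [ceN_mk, EColor]
            rw [if_neg (show ¬(c-(i:ℕ)-2+1 = n) by omega)]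
            show (i:ℕ)+(c-(i:ℕ)-2)+2 = c
            omega
    | inr j =>
      have hj := j.isLt
      by_cases hlast : (j:ℕ)+1 = n
      · refine ⟨n+2, ?_⟩
        rw [KB_deg_inr]
        have hcv : cvN m n (Sum.inr j) = m+n+2 := by
          simp only [cvN, Sum.elim_inr, if_pos hlast]
        ext c
        simp only [palette, Set.mem_insert_iff, Set.mem_setOf_eq, hcv, Set.mem_Icc]
        constructor
        · rintro (rfl | ⟨e, he, hv, rfl⟩)
          · omega
          · obtain ⟨i, rfl⟩ := KB_edge_at_inr he hv
            have := i.isLt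
            simp only [ceN_mk, EColor, if_pos hlast]
            omega
        · intro hcc
          by_cases hc1 : c = m+n+2
          · exact Or.inl hc1
          · right
            refine ⟨s(Sum.inl ⟨c-n-2, by omega⟩, Sum.inr j), KB_edge_mem _ _, by simp, ?_⟩
            simp only [ceN_mk, EColor, if_pos hlast]
            show c-n-2+n+2 = c
            omega
      · refine ⟨(j:ℕ)+1, ?_⟩
        rw [KB_deg_inr]
        have hcv : cvN m n (Sum.inr j) = (j:ℕ)+1 := by
          simp only [cvN, Sum.elim_inr, if_neg hlast]
        ext c
        simp only [palette, Set.mem_insert_iff, Set.mem_setOf_eq, hcv, Set.mem_Icc]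
        constructor
        · rintro (rfl | ⟨e, he, hv, rfl⟩)
          · omega
          · obtain ⟨i, rfl⟩ := KB_edge_at_inr he hv
            have := i.isLt
            simp only [ceN_mk, EColor, if_neg hlast]
            omega
        · intro hcc
          by_cases hc1 : c = (j:ℕ)+1
          · exact Or.inl hc1
          · right
            refine ⟨s(Sum.inl ⟨c-(j:ℕ)-2, by omega⟩, Sum.inr j), KB_edge_mem _ _, by simp, ?_⟩
            simp only [ceN_mk, EColor, if_neg hlast]
            show c-(j:ℕ)-2+(j:ℕ)+2 = c
            omega

lemma sym2_swap_swap {α β : Type*} (e : Sym2 (α ⊕ β)) :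
    Sym2.map Sum.swap (Sym2.map Sum.swap e) = e := by
  rw [Sym2.map_map]
  have : (Sum.swap ∘ Sum.swap : α ⊕ β → α ⊕ β) = id := by
    funext x; exact Sum.swap_swap x
  rw [this, Sym2.map_id, id_eq]

lemma swap_mem_map {α β : Type*} (v : α ⊕ β) (e : Sym2 (α ⊕ β)) :
    v ∈ e ↔ v.swap ∈ Sym2.map Sum.swap e := by
  constructor
  · intro h
    exact Sym2.mem_map.mpr ⟨v, h, rfl⟩
  · intro h
    obtain ⟨a, ha, haa⟩ := Sym2.mem_map.mp h
    have : a = v := by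
      have := congrArg Sum.swap haa
      rwa [Sum.swap_swap, Sum.swap_swap] at this
    exact this ▸ ha
  
lemma KB_swap_edge {m n : ℕ} (e : Sym2 (Fin m ⊕ Fin n)) :
    e ∈ (KB m n).edgeSet ↔ Sym2.map Sum.swap e ∈ (KB n m).edgeSet := by
  induction e with
  | _ x y =>
    rw [Sym2.map_pair_eq, SimpleGraph.mem_edgeSet, SimpleGraph.mem_edgeSet]
    cases x <;> cases y <;> simp [completeBipartiteGraph]

lemma KB_swap_has {m n t : ℕ} (h : HasIntervalTotalColoring (KB n m) t) :
    HasIntervalTotalColoring (KB m n) t := by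
  obtain ⟨cv, ce, ⟨hvv, hee, hve⟩, hcv, hce, hall, hpal⟩ := h
  refine ⟨cv ∘ Sum.swap, ce ∘ Sym2.map Sum.swap, ⟨?_, ?_, ?_⟩, ?_, ?_, ?_, ?_⟩
  · intro u v huv
    apply hvv
    rw [KB_adj_iff] at huv
    rcases huv with ⟨i, j, rfl, rfl⟩ | ⟨i, j, rfl, rfl⟩ <;>
      simp [completeBipartiteGraph, Sum.swap]
  · intro e f he hf hne hshare
    apply hee _ _ ((KB_swap_edge e).mp he) ((KB_swap_edge f).mp hf)
    · intro hh
      apply hne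
      have := congrArg (Sym2.map Sum.swap) hh
      rwa [sym2_swap_swap, sym2_swap_swap] at this
    · obtain ⟨w, hw1, hw2⟩ := hshare
      exact ⟨w.swap, (swap_mem_map w e).mp hw1, (swap_mem_map w f).mp hw2⟩
  · intro v e he hv
    exact hve v.swap _ ((KB_swap_edge e).mp he) ((swap_mem_map v e).mp hv)
  · intro v; exact hcv v.swap
  · intro e he; exact hce _ ((KB_swap_edge e).mp he)
  · intro c hc
    rcases hall c hc with ⟨v, rfl⟩ | ⟨e, he, rfl⟩
    · refine Or.inl ⟨v.swap, ?_⟩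
      simp [Sum.swap_swap]
    · refine Or.inr ⟨Sym2.map Sum.swap e, ?_, ?_⟩
      · rw [KB_swap_edge, sym2_swap_swap]; exact he
      · simp [sym2_swap_swap]
  · intro v
    have hpaleq : palette (KB m n) (cv ∘ Sum.swap) (ce ∘ Sym2.map Sum.swap) v
        = palette (KB n m) cv ce v.swap := by
      ext c
      simp only [palette, Set.mem_insert_iff, Set.mem_setOf_eq, Function.comp_apply]
      constructor
      · rintro (rfl | ⟨e, he, hv, rfl⟩)
        · exact Or.inl rfl
        · exact Or.inr ⟨Sym2.map Sum.swap e, (KB_swap_edge e).mp he,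
            (swap_mem_map v e).mp hv, rfl⟩
      · rintro (rfl | ⟨f, hf, hv, rfl⟩)
        · exact Or.inl rfl
        · refine Or.inr ⟨Sym2.map Sum.swap f, ?_, ?_, by rw [sym2_swap_swap]⟩
          · rw [KB_swap_edge, sym2_swap_swap]; exact hf
          · rw [swap_mem_map v, sym2_swap_swap]; exact hv
    have hdeg : deg (KB m n) v = deg (KB n m) v.swap := by
      rcases v with i | j
      · rw [KB_deg_inl]; show _ = deg (KB n m) (Sum.inr i); rw [KB_deg_inr]
      · rw [KB_deg_inr]; show _ = deg (KB n m) (Sum.inl j); rw [KB_deg_inl]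
    obtain ⟨a, ha⟩ := hpal v.swap
    exact ⟨a, by rw [hpaleq, hdeg]; exact ha⟩


theorem stmt13 (m n : ℕ) (hm : 0 < m) (hn : 0 < n) :
    (¬(m = 1 ∧ n = 1) →
      Wtau (completeBipartiteGraph (Fin m) (Fin n)) = m + n + 2) ∧
    Wtau (completeBipartiteGraph (Fin 1) (Fin 1)) = 3 := by
  constructor
  · intro hne
    have hhas : HasIntervalTotalColoring (KB m n) (m+n+2) := by
      rcases Nat.lt_or_ge n 2 with h | h
      · have hn1 : n = 1 := by omega
        have hm2 : 2 ≤ m := by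
          rcases Nat.lt_or_ge m 2 with h' | h' 
          · exact absurd ⟨by omega, hn1⟩ hne
          · exact h'
        subst hn1
        have h' := KB_swap_has (KBn_has 1 m Nat.one_pos hm2)
        rwa [show m+1+2 = 1+m+2 by omega]
      · exact KBn_has m n hm h
    have hbdd : BddAbove {t | HasIntervalTotalColoring (KB m n) t} :=
      ⟨m+n+2, fun t ht => (KB_ub hm hn ht).1⟩
    apply le_antisymm
    · exact csSup_le ⟨_, hhas⟩ (fun t ht => (KB_ub hm hn ht).1)
    · exact le_csSup hbdd hhas
  · have hbdd : BddAbove {t | HasIntervalTotalColoring (KB 1 1) t} :=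
      ⟨3, fun t ht => (KB_ub Nat.one_pos Nat.one_pos ht).2 rfl rfl⟩
    apply le_antisymm
    · exact csSup_le ⟨3, K11_has⟩ (fun t ht => (KB_ub Nat.one_pos Nat.one_pos ht).2 rfl rfl)
    · exact le_csSup hbdd K11_has

end ITC
end
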